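/- arXiv:1909.00780 — 10 statements merged into one kernel-verified Lean document; each statement's English description precedes it below -/
import Mathlib

section
/- If f(z) = Σ_{n=0}^∞ a_n z^n is analytic in the unit disk D = {z ∈ ℂ : |z| < 1} with |f(z)| ≤ 1 for all z ∈ D, then for every r with 0 ≤ r ≤ 1/3 one has Σ_{n=0}^∞ |a_n| r^n ≤ 1. -/
open Metric

open Finset
open scoped ENNReal NNReal


-- key algebraic inequality
lemma mobius_abs_le {c u : ℂ} (hc : ‖c‖ ≤ 1) (hu : ‖u‖ ≤ 1) :
    ‖c - u‖ ≤ ‖1 - (starRingEnd ℂ c) * u‖ := by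
  have h1 : Complex.normSq c ≤ 1 := by
    rw [← Complex.sq_norm]; nlinarith [norm_nonneg c]
  have h2 : Complex.normSq u ≤ 1 := by
    rw [← Complex.sq_norm]; nlinarith [norm_nonneg u]
  have key : Complex.normSq (c - u) ≤ Complex.normSq (1 - (starRingEnd ℂ c) * u) := by
    simp only [Complex.normSq_apply, Complex.sub_re, Complex.sub_im, Complex.mul_re,
      Complex.mul_im, Complex.one_re, Complex.one_im, Complex.conj_re, Complex.conj_im]
      at *
    nlinarith [sq_nonneg (c.re*u.re + c.im*u.im), sq_nonneg (c.re*u.im - c.im*u.re)]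
  have := Real.sqrt_le_sqrt key
  simpa [Complex.norm_def] using this

lemma schwarz_pick_zero {h : ℂ → ℂ} (hd : DifferentiableOn ℂ h (ball 0 1))
    (hb : ∀ w ∈ ball (0 : ℂ) 1, ‖h w‖ ≤ 1) :
    ‖deriv h 0‖ ≤ 1 - ‖h 0‖ ^ 2 := by
  have h0m : (0 : ℂ) ∈ ball (0 : ℂ) 1 := by simp
  set c := h 0 with hc
  have hcle : ‖c‖ ≤ 1 := hb 0 h0m
  rcases eq_or_lt_of_le hcle with heq | hlt
  · -- |h 0| = 1 : maximum principle gives h constant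
    have hmax : IsMaxOn (norm ∘ h) (ball (0:ℂ) 1) 0 := by
      intro w hw
      simp only [Function.comp_apply, Set.mem_setOf_eq, ← hc, ← heq]
      exact (hb w hw).trans_eq heq.symm
    have heqon := Complex.eqOn_of_isPreconnected_of_isMaxOn_norm
      (convex_ball (0:ℂ) 1).isPreconnected isOpen_ball hd h0m hmax
    have hev : h =ᶠ[nhds (0:ℂ)] fun _ => c := by
      filter_upwards [isOpen_ball.mem_nhds h0m] with w hw
      exact heqon hw
    rw [hev.deriv_eq, deriv_const]
    simp [← heq]
    nlinarith
  · -- |h 0| < 1 : Möbius transform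
    set d := deriv h 0 with hdd
    have hden : ∀ w ∈ ball (0:ℂ) 1, (1 - (starRingEnd ℂ c) * h w) ≠ 0 := by
      intro w hw hzero
      have : ‖(starRingEnd ℂ c) * h w‖ < 1 := by
        rw [norm_mul, Complex.norm_conj]
        calc ‖c‖ * ‖h w‖ ≤ ‖c‖ * 1 :=
          mul_le_mul_of_nonneg_left (hb w hw) (norm_nonneg c)
        _ < 1 := by simpa using hlt
      rw [sub_eq_zero] at hzero
      rw [← hzero] at this
      simp at this
    set g : ℂ → ℂ := fun w => (c - h w) / (1 - (starRingEnd ℂ c) * h w) with hg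
    have hgd : DifferentiableOn ℂ g (ball 0 1) := by
      apply DifferentiableOn.div
      · exact (differentiableOn_const c).sub hd
      · exact (differentiableOn_const 1).sub ((differentiableOn_const _).mul hd)
      · exact hden
    have hg0 : g 0 = 0 := by simp [hg, ← hc]
    have hgb : ∀ w ∈ ball (0:ℂ) 1, ‖g w‖ ≤ 1 := by
      intro w hw
      rw [hg]
      simp only [norm_div]
      rcases eq_or_ne (1 - (starRingEnd ℂ c) * h w) 0 with h0 | h0
      · exact absurd h0 (hden w hw)
      · have hpos' : 0 < ‖1 - (starRingEnd ℂ c) * h w‖ :=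
          norm_pos_iff.mpr h0
        rw [div_le_one hpos']
        exact mobius_abs_le hcle (hb w hw)
    -- Schwarz: ‖deriv g 0‖ ≤ 1
    have hds : ‖deriv g 0‖ ≤ 1 := by
      have key : ∀ R : ℝ, 1 < R → ‖deriv g 0‖ ≤ R := by
        intro R hR
        have hmaps : Set.MapsTo g (ball 0 1) (closedBall (g 0) R) := by
          intro w hw
          rw [hg0, mem_closedBall_zero_iff]
          exact le_trans (hgb w hw) hR.le
        simpa using Complex.norm_deriv_le_div_of_mapsTo_ball hgd hmaps one_pos
      by_contra hcon
      push_neg at hcon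
      linarith [key ((1 + ‖deriv g 0‖)/2) (by linarith)]
    -- compute deriv g 0
    have hhd : HasDerivAt h d 0 := by
      rw [hdd]
      exact (hd.differentiableAt (isOpen_ball.mem_nhds h0m)).hasDerivAt
    have hnum : HasDerivAt (fun w => c - h w) (-d) 0 := by have := (hasDerivAt_const (0:ℂ) c).sub hhd; rwa [zero_sub] at this
    have hden' : HasDerivAt (fun w => 1 - (starRingEnd ℂ c) * h w)
        (-((starRingEnd ℂ c) * d)) 0 :=
      by have := (hasDerivAt_const (0:ℂ) 1).sub (hhd.const_mul ((starRingEnd ℂ) c)); rwa [zero_sub] at this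
    have hdenne : (1 - (starRingEnd ℂ c) * h 0) ≠ 0 := hden 0 h0m
    have hgder : HasDerivAt g
        (((-d) * (1 - (starRingEnd ℂ c) * h 0) - (c - h 0) * (-((starRingEnd ℂ c) * d)))
          / (1 - (starRingEnd ℂ c) * h 0) ^ 2) 0 := hnum.div hden' hdenne
    have hsimp : ((-d) * (1 - (starRingEnd ℂ c) * h 0)
        - (c - h 0) * (-((starRingEnd ℂ c) * d)))
          / (1 - (starRingEnd ℂ c) * h 0) ^ 2 = -d / (1 - (starRingEnd ℂ c) * c) := by
      rw [← hc]
      have hne : 1 - (starRingEnd ℂ c) * c ≠ 0 := hdenne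
      rw [div_eq_div_iff (pow_ne_zero 2 hne) hne]
      ring
    have hgder0 : deriv g 0 = -d / (1 - (starRingEnd ℂ c) * c) := by
      rw [hgder.deriv, hsimp]
    have habs : ‖1 - (starRingEnd ℂ c) * c‖ = 1 - ‖c‖ ^ 2 := by
      have : (starRingEnd ℂ c) * c = (Complex.normSq c : ℂ) := by
        rw [mul_comm, Complex.mul_conj]
      rw [this, ← Complex.ofReal_one, ← Complex.ofReal_sub, Complex.norm_real, Real.norm_eq_abs,
        abs_of_nonneg (by rw [← Complex.sq_norm]; nlinarith [norm_nonneg c, hlt])]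
      rw [← Complex.sq_norm]
    rw [hgder0] at hds
    rw [norm_div, norm_neg, habs] at hds
    have hpos : (0:ℝ) < 1 - ‖c‖ ^ 2 := by nlinarith [norm_nonneg c]
    rw [div_le_one hpos] at hds
    simpa using hds


lemma rootsum (n : ℕ) (hn : 0 < n) (m : ℕ) :
    ∑ j ∈ Finset.range n, (Complex.exp (2 * Real.pi * Complex.I / n)) ^ (m * j)
      = if n ∣ m then (n : ℂ) else 0 := by
  have hprim : IsPrimitiveRoot (Complex.exp (2 * Real.pi * Complex.I / n)) n :=
    Complex.isPrimitiveRoot_exp n hn.ne'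
  set ω := Complex.exp (2 * Real.pi * Complex.I / n)
  have hsum : ∑ j ∈ Finset.range n, ω ^ (m * j) = ∑ j ∈ Finset.range n, (ω ^ m) ^ j := by
    simp [pow_mul]
  rw [hsum]
  by_cases hdvd : n ∣ m
  · have h1 : ω ^ m = 1 := (hprim.pow_eq_one_iff_dvd m).2 hdvd
    simp [h1, hdvd]
  · have h1 : ω ^ m ≠ 1 := fun h => hdvd ((hprim.pow_eq_one_iff_dvd m).1 h)
    rw [geom_sum_eq h1]
    have h2 : (ω ^ m) ^ n = 1 := by
      rw [← pow_mul, mul_comm, pow_mul, hprim.pow_eq_one, one_pow]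
    simp [h2, hdvd]

-- for w in disk, HasSum of the "n-th diagonal" series to the rotation average
lemma diag_hasSum (f : ℂ → ℂ) (a : ℕ → ℂ)
    (hf : ∀ z ∈ ball (0 : ℂ) 1, HasSum (fun m : ℕ => a m * z ^ m) (f z))
    (hbd : ∀ z ∈ ball (0 : ℂ) 1, ‖f z‖ ≤ 1)
    (n : ℕ) (hn : 0 < n) (w : ℂ) (hw : w ∈ ball (0 : ℂ) 1) :
    ∃ S : ℂ, HasSum (fun k : ℕ => a (n * k) * w ^ k) S ∧ ‖S‖ ≤ 1 := by
  classical
  obtain ⟨z, hz⟩ := IsAlgClosed.exists_pow_nat_eq w hn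
  have hwlt : ‖w‖ < 1 := mem_ball_zero_iff.1 hw
  have hzlt : ‖z‖ < 1 := by
    by_contra hcon
    push_neg at hcon
    have h1 : (1:ℝ) ≤ ‖z‖ ^ n := one_le_pow₀ hcon
    rw [← norm_pow, hz] at h1
    linarith
  set ω := Complex.exp (2 * Real.pi * Complex.I / n) with hω
  have hωabs : ‖ω‖ = 1 := by
    rw [hω]
    rw [Complex.norm_exp]
    norm_num
  -- each rotated point is in the ball
  have hrot : ∀ j : ℕ, ω ^ j * z ∈ ball (0:ℂ) 1 := by
    intro j
    rw [mem_ball_zero_iff, norm_mul, norm_pow, hωabs, one_pow, one_mul]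
    exact hzlt
  set S : ℂ := (n : ℂ)⁻¹ * ∑ j ∈ Finset.range n, f (ω ^ j * z) with hS
  have hsum1 : HasSum (fun m : ℕ => (n:ℂ)⁻¹ * ∑ j ∈ Finset.range n, a m * (ω ^ j * z) ^ m) S := by
    rw [hS]
    exact (hasSum_sum fun j _ => hf (ω ^ j * z) (hrot j)).mul_left _
  have hkey : ∀ m : ℕ, (n:ℂ)⁻¹ * ∑ j ∈ Finset.range n, a m * (ω ^ j * z) ^ m
      = if n ∣ m then a m * z ^ m else 0 := by
    intro m
    have : ∑ j ∈ Finset.range n, a m * (ω ^ j * z) ^ m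
        = (a m * z ^ m) * ∑ j ∈ Finset.range n, ω ^ (m * j) := by
      rw [Finset.mul_sum]
      congr 1
      ext j
      rw [mul_pow, ← pow_mul, mul_comm j m]
      ring
    rw [this, rootsum n hn m]
    by_cases hdvd : n ∣ m
    · simp only [hdvd, if_true]
      have hn0 : (n:ℂ) ≠ 0 := Nat.cast_ne_zero.2 hn.ne'
      field_simp
    · simp [hdvd]
  have hsum2 : HasSum (fun m : ℕ => if n ∣ m then a m * z ^ m else 0) S := by
    convert hsum1 using 1
    ext m
    rw [hkey m]
  -- reindex by multiples of n
  have hinj : Function.Injective (fun k : ℕ => n * k) := fun x y h => by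
    simpa [Nat.mul_left_cancel_iff hn] using h
  have hsupp : ∀ m ∉ Set.range (fun k : ℕ => n * k),
      (if n ∣ m then a m * z ^ m else 0) = 0 := by
    intro m hm
    rw [if_neg]
    intro ⟨k, hk⟩
    exact hm ⟨k, hk.symm⟩
  have hsum3 : HasSum (fun k : ℕ => a (n * k) * w ^ k) S := by
    have := (Function.Injective.hasSum_iff hinj hsupp).2 hsum2
    convert this using 1
    ext k
    simp only [Function.comp_apply]
    rw [if_pos ⟨k, rfl⟩, ← hz, ← pow_mul]
  refine ⟨S, hsum3, ?_⟩
  rw [hS, norm_mul, norm_inv]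
  have hcard : ‖∑ j ∈ Finset.range n, f (ω ^ j * z)‖ ≤ n := by
    calc ‖∑ j ∈ Finset.range n, f (ω ^ j * z)‖
        ≤ ∑ j ∈ Finset.range n, ‖f (ω ^ j * z)‖ := by
          exact norm_sum_le _ _
      _ ≤ ∑ j ∈ Finset.range n, 1 := Finset.sum_le_sum fun j _ => hbd _ (hrot j)
      _ = n := by simp
  have hnabs : ‖(n : ℂ)‖ = n := by
    simp
  rw [hnabs]
  calc (n:ℝ)⁻¹ * ‖∑ j ∈ Finset.range n, f (ω ^ j * z)‖
      ≤ (n:ℝ)⁻¹ * n := by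
        apply mul_le_mul_of_nonneg_left hcard
        positivity
    _ = 1 := by field_simp

lemma wiener (f : ℂ → ℂ) (a : ℕ → ℂ)
    (hf : ∀ z ∈ ball (0 : ℂ) 1, HasSum (fun m : ℕ => a m * z ^ m) (f z))
    (hbd : ∀ z ∈ ball (0 : ℂ) 1, ‖f z‖ ≤ 1)
    (n : ℕ) (hn : 0 < n) :
    ‖a n‖ ≤ 1 - ‖a 0‖ ^ 2 := by
  classical
  set b : ℕ → ℂ := fun k => a (n * k) with hb
  set h : ℂ → ℂ := fun w => ∑' k : ℕ, b k * w ^ k with hh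
  have hhs : ∀ w ∈ ball (0:ℂ) 1, HasSum (fun k : ℕ => b k * w ^ k) (h w) := by
    intro w hw
    obtain ⟨S, hS, _⟩ := diag_hasSum f a hf hbd n hn w hw
    have : h w = S := hS.tsum_eq
    rw [this]; exact hS
  have hhb : ∀ w ∈ ball (0:ℂ) 1, ‖h w‖ ≤ 1 := by
    intro w hw
    obtain ⟨S, hS, hSle⟩ := diag_hasSum f a hf hbd n hn w hw
    rw [show h w = S from hS.tsum_eq]; exact hSle
  set q := FormalMultilinearSeries.ofScalars ℂ b with hq'
  have hrad : 1 ≤ q.radius := by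
    apply ENNReal.le_of_forall_nnreal_lt
    intro ρ hρ
    have hρ1 : (ρ : ℝ) < 1 := by exact_mod_cast hρ
    have hmem : ((ρ : ℝ) : ℂ) ∈ ball (0:ℂ) 1 := by
      rw [mem_ball_zero_iff, Complex.norm_real]
      simpa [abs_of_nonneg ρ.coe_nonneg] using hρ1
    have hsummable : Summable (fun k : ℕ => b k * ((ρ:ℝ):ℂ) ^ k) := (hhs _ hmem).summable
    apply FormalMultilinearSeries.le_radius_of_tendsto (l := 0)
    have ht := hsummable.tendsto_atTop_zero.norm
    simp only [norm_zero] at ht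
    convert ht using 2 with k
    rw [hq', FormalMultilinearSeries.ofScalars_norm, norm_mul, norm_pow, Complex.norm_real,
      Real.norm_eq_abs, abs_of_nonneg ρ.coe_nonneg]
  have hball : Metric.eball (0:ℂ) 1 = ball (0:ℂ) 1 := by
    rw [← ENNReal.coe_one, Metric.eball_coe, NNReal.coe_one]
  have hq : HasFPowerSeriesOnBall h q 0 1 := by
    refine ⟨hrad, zero_lt_one, ?_⟩
    intro y hy
    rw [EMetric.mem_ball, edist_zero_right] at hy
    have hy' : y ∈ ball (0:ℂ) 1 := by
      rw [← hball, EMetric.mem_ball, edist_zero_right]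
      exact hy
    have := hhs y hy'
    simp only [zero_add]
    simp only [hq', FormalMultilinearSeries.ofScalars_apply_eq, smul_eq_mul]
    exact this
  have hdiff : DifferentiableOn ℂ h (ball 0 1) := by
    rw [← hball]
    exact fun w hw => ((hq.analyticOnNhd) w hw).differentiableWithinAt
  have h0 : h 0 = a 0 := by
    have h1 : HasSum (fun k : ℕ => b k * (0:ℂ) ^ k) (b 0 * (0:ℂ) ^ 0) :=
      hasSum_single 0 (fun k hk => by simp [zero_pow hk])
    have := (hhs 0 (by simp)).unique h1
    simpa [hb] using this
  have hderiv : deriv h 0 = a n := by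
    rw [hq.hasFPowerSeriesAt.deriv]
    show q 1 (fun _ => 1) = a n
    rw [hq', FormalMultilinearSeries.ofScalars_apply_eq]
    simp [hb]
  calc ‖a n‖ = ‖deriv h 0‖ := by rw [hderiv]
    _ ≤ 1 - ‖h 0‖ ^ 2 := schwarz_pick_zero hdiff hhb
    _ = 1 - ‖a 0‖ ^ 2 := by rw [h0]

/-- **Classical Bohr inequality.** If `f(z) = Σ aₙ zⁿ` is analytic in the unit disk with
`|f(z)| ≤ 1` there, then `Σ |aₙ| rⁿ ≤ 1` for every `0 ≤ r ≤ 1/3`. -/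
theorem bohr_inequality
    (f : ℂ → ℂ) (a : ℕ → ℂ)
    (hf : ∀ z ∈ ball (0 : ℂ) 1, HasSum (fun n : ℕ => a n * z ^ n) (f z))
    (hbd : ∀ z ∈ ball (0 : ℂ) 1, ‖f z‖ ≤ 1)
    (r : ℝ) (hr0 : 0 ≤ r) (hr : r ≤ 1 / 3) :
    ∑' n : ℕ, ‖a n‖ * r ^ n ≤ 1 := by
  have hr1 : r < 1 := by linarith
  -- |a 0| ≤ 1
  have h0mem : (0:ℂ) ∈ ball (0:ℂ) 1 := by simp
  have ha0 : a 0 = f 0 := by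
    have h1 : HasSum (fun m : ℕ => a m * (0:ℂ) ^ m) (a 0 * (0:ℂ) ^ 0) :=
      hasSum_single 0 (fun k hk => by simp [zero_pow hk])
    have := h1.unique (hf 0 h0mem)
    simpa using this
  set A := ‖a 0‖ with hA
  have hA0 : 0 ≤ A := norm_nonneg _
  have hA1 : A ≤ 1 := by rw [hA, ha0]; exact hbd 0 h0mem
  have hW : ∀ k : ℕ, ‖a (k + 1)‖ ≤ 1 - A ^ 2 :=
    fun k => wiener f a hf hbd (k + 1) (Nat.succ_pos k)
  have hB0 : 0 ≤ 1 - A ^ 2 := by nlinarith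
  -- summability
  set g : ℕ → ℝ := fun m => ‖a m‖ * r ^ m with hg
  have hgeo : Summable (fun k : ℕ => (1 - A ^ 2) * r ^ (k + 1)) := by
    have := (summable_geometric_of_lt_one hr0 hr1).mul_left ((1 - A ^ 2) * r)
    exact this.congr fun k => by ring
  have hshift : Summable (fun k : ℕ => g (k + 1)) := by
    apply Summable.of_nonneg_of_le (fun k => by positivity) _ hgeo
    intro k
    exact mul_le_mul_of_nonneg_right (hW k) (by positivity)
  have hgsum : Summable g := by
    rw [← summable_nat_add_iff 1]
    exact hshift
  rw [hgsum.tsum_eq_zero_add]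
  have h1 : g 0 = A := by simp [hg, hA]
  have h2 : ∑' k : ℕ, g (k + 1) ≤ ∑' k : ℕ, (1 - A ^ 2) * r ^ (k + 1) := by
    apply Summable.tsum_le_tsum _ hshift hgeo
    intro k
    exact mul_le_mul_of_nonneg_right (hW k) (by positivity)
  have h3 : ∑' k : ℕ, (1 - A ^ 2) * r ^ (k + 1) = (1 - A ^ 2) * r * (1 - r)⁻¹ := by
    have : ∀ k : ℕ, (1 - A ^ 2) * r ^ (k + 1) = ((1 - A ^ 2) * r) * r ^ k := by
      intro k; ring
    rw [tsum_congr this, tsum_mul_left, tsum_geometric_of_lt_one hr0 hr1]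
  have h4 : r * (1 - r)⁻¹ ≤ 1 / 2 := by
    rw [← div_eq_mul_inv, div_le_iff₀ (by linarith)]
    linarith
  have h5 : (1 - A ^ 2) * r * (1 - r)⁻¹ ≤ (1 - A ^ 2) * (1 / 2) := by
    rw [mul_assoc]
    exact mul_le_mul_of_nonneg_left h4 hB0
  rw [h1]
  nlinarith [sq_nonneg (1 - A)]
end

section
/- For every p with 0 < p ≤ 2, the infimum over x ∈ [0,1) of the quantity (1 − x^p)/(2 − x² − x^p) equals p/(2+p). -/
/-- For every `0 < p ≤ 2`, the infimum over `x ∈ [0,1)` of `(1 − x^p)/(2 − x² − x^p)`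
equals `p/(2+p)`. -/
theorem inf_phi_eq (p : ℝ) (hp0 : 0 < p) (hp2 : p ≤ 2) :
    sInf ((fun x : ℝ => (1 - x ^ p) / (2 - x ^ 2 - x ^ p)) '' Set.Ico (0 : ℝ) 1) =
      p / (2 + p) := by
  have h2p : (0:ℝ) < 2 + p := by linarith
  -- positivity facts on [0,1)
  have hA : ∀ x ∈ Set.Ico (0:ℝ) 1, 0 < 1 - x ^ p := by
    rintro x ⟨hx0, hx1⟩
    have := Real.rpow_lt_one hx0 hx1 hp0
    linarith
  have hB : ∀ x ∈ Set.Ico (0:ℝ) 1, 0 < 1 - x ^ 2 := by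
    rintro x ⟨hx0, hx1⟩; nlinarith
  have hden : ∀ x ∈ Set.Ico (0:ℝ) 1, 0 < 2 - x ^ 2 - x ^ p := by
    intro x hx; have := hA x hx; have := hB x hx; linarith
  -- key inequality via weighted AM-GM: p * (1 - x^2) ≤ 2 * (1 - x^p)
  have key : ∀ x ∈ Set.Ico (0:ℝ) 1,
      p / (2 + p) ≤ (1 - x ^ p) / (2 - x ^ 2 - x ^ p) := by
    rintro x hx
    obtain ⟨hx0, hx1⟩ := hx
    have hq : x ^ p = (x ^ 2) ^ (p / 2) := by
      rw [← Real.rpow_natCast x 2, ← Real.rpow_mul hx0]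
      congr 1; ring
    have hgm := Real.geom_mean_le_arith_mean2_weighted
      (by linarith : (0:ℝ) ≤ p / 2) (by linarith : (0:ℝ) ≤ 1 - p / 2)
      (by positivity : (0:ℝ) ≤ x ^ 2) zero_le_one (by ring)
    rw [Real.one_rpow, mul_one] at hgm
    have hkey : p * (1 - x ^ 2) ≤ 2 * (1 - x ^ p) := by
      rw [hq]; nlinarith
    rw [div_le_div_iff₀ h2p (hden x ⟨hx0, hx1⟩)]
    nlinarith [hA x ⟨hx0, hx1⟩]
  have hne : ((fun x : ℝ => (1 - x ^ p) / (2 - x ^ 2 - x ^ p)) '' Set.Ico (0:ℝ) 1).Nonempty :=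
    ⟨_, ⟨0, ⟨le_refl 0, by norm_num⟩, rfl⟩⟩
  have hbdd : BddBelow ((fun x : ℝ => (1 - x ^ p) / (2 - x ^ 2 - x ^ p)) '' Set.Ico (0:ℝ) 1) := by
    refine ⟨p / (2 + p), ?_⟩
    rintro y ⟨x, hx, rfl⟩
    exact key x hx
  apply le_antisymm
  · -- sInf ≤ p/(2+p): the value is approached as x → 1⁻
    rw [Real.sInf_le_iff hbdd hne]
    intro ε hε
    -- slope of x^p at 1 tends to p
    have hderiv : HasDerivAt (fun x : ℝ => x ^ p) p 1 := by
      have := Real.hasDerivAt_rpow_const (x := 1) (p := p) (Or.inl one_ne_zero)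
      simpa using this
    have hslope : Filter.Tendsto (slope (fun x : ℝ => x ^ p) 1)
        (nhdsWithin 1 {(1:ℝ)}ᶜ) (nhds p) := hasDerivAt_iff_tendsto_slope.mp hderiv
    have hsub : Set.Ico (0:ℝ) 1 ⊆ {(1:ℝ)}ᶜ := by
      rintro x ⟨hx0, hx1⟩; simp; linarith
    have hslope' : Filter.Tendsto (slope (fun x : ℝ => x ^ p) 1)
        (nhdsWithin 1 (Set.Ico (0:ℝ) 1)) (nhds p) :=
      hslope.mono_left (nhdsWithin_mono _ hsub)
    have hid : Filter.Tendsto (fun x : ℝ => 1 + x + slope (fun x : ℝ => x ^ p) 1 x)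
        (nhdsWithin 1 (Set.Ico (0:ℝ) 1)) (nhds (2 + p)) := by
      have h1 : Filter.Tendsto (fun x : ℝ => 1 + x)
          (nhdsWithin 1 (Set.Ico (0:ℝ) 1)) (nhds 2) := by
        have h2 : Filter.Tendsto (fun x : ℝ => 1 + x) (nhds 1) (nhds (1 + 1)) :=
          tendsto_const_nhds.add Filter.tendsto_id
        norm_num at h2
        exact h2.mono_left nhdsWithin_le_nhds
      exact h1.add hslope'
    have htend : Filter.Tendsto (fun x : ℝ => (1 - x ^ p) / (2 - x ^ 2 - x ^ p))
        (nhdsWithin 1 (Set.Ico (0:ℝ) 1)) (nhds (p / (2 + p))) := by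
      have hdiv := hslope'.div hid (by linarith : (2:ℝ) + p ≠ 0)
      refine Filter.Tendsto.congr' ?_ hdiv
      filter_upwards [eventually_mem_nhdsWithin] with x hx
      obtain ⟨hx0, hx1⟩ := hx
      have h1x : (1:ℝ) - x ≠ 0 := by intro h; nlinarith
      have hd := hden x ⟨hx0, hx1⟩
      have hs : slope (fun x : ℝ => x ^ p) 1 x = (1 - x ^ p) / (1 - x) := by
        rw [slope_def_field, Real.one_rpow, ← neg_div_neg_eq]
        ring_nf
      have he : (1:ℝ) + x + (1 - x ^ p) / (1 - x) = (2 - x ^ 2 - x ^ p) / (1 - x) := by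
        field_simp
        ring
      simp only [Pi.div_apply, hs, he]
      rw [div_div_div_cancel_right₀]
      exact h1x
    have hNB : (nhdsWithin (1:ℝ) (Set.Ico (0:ℝ) 1)).NeBot := by
      rw [← mem_closure_iff_nhdsWithin_neBot, closure_Ico (by norm_num : (0:ℝ) ≠ 1)]
      exact ⟨by norm_num, le_refl 1⟩
    have hev := (htend.eventually_lt_const (by linarith : p / (2 + p) < p / (2 + p) + ε)).and
      eventually_mem_nhdsWithin
    obtain ⟨x, hlt, hmem⟩ := hev.exists
    exact ⟨_, Set.mem_image_of_mem _ hmem, hlt⟩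
  · refine le_csInf hne ?_
    rintro y ⟨x, hx, rfl⟩
    exact key x hx
end

section
/- For every p with 0 < p ≤ 2, the function φ(x) = (1 − x^p)/(2 − x² − x^p) is monotonically decreasing on [0,1); equivalently, the function A(x) = −p − (2−p)x² + 2x^{2−p} satisfies A(x) ≤ 0 for all x ∈ [0,1]. -/
/-- For every `0 < p ≤ 2`, the function `φ(x) = (1 − x^p)/(2 − x² − x^p)` is monotonically
decreasing on `[0,1)`; equivalently, `A(x) = −p − (2−p)x² + 2x^{2−p}` satisfies `A(x) ≤ 0`
for all `x ∈ [0,1]`. -/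
theorem phi_antitone_and_A_nonpos (p : ℝ) (hp0 : 0 < p) (hp2 : p ≤ 2) :
    AntitoneOn (fun x : ℝ => (1 - x ^ p) / (2 - x ^ 2 - x ^ p)) (Set.Ico (0 : ℝ) 1) ∧
      ∀ x ∈ Set.Icc (0 : ℝ) 1, -p - (2 - p) * x ^ 2 + 2 * x ^ (2 - p) ≤ 0 := by
  -- Part 2 first : A(x) ≤ 0 on [0,1] (weighted AM-GM)
  have hA : ∀ x ∈ Set.Icc (0 : ℝ) 1, -p - (2 - p) * x ^ 2 + 2 * x ^ (2 - p) ≤ 0 := by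
    intro x hx
    obtain ⟨hx0, hx1⟩ := hx
    have hθ0 : (0:ℝ) ≤ (2 - p) / 2 := by linarith
    have hθ1 : (0:ℝ) ≤ p / 2 := by linarith
    have hsum : p / 2 + (2 - p) / 2 = 1 := by ring
    have hgm := Real.geom_mean_le_arith_mean2_weighted hθ1 hθ0 zero_le_one
      (by positivity : (0:ℝ) ≤ x ^ 2) hsum
    have hpow : (x ^ 2 : ℝ) ^ ((2 - p) / 2) = x ^ (2 - p) := by
      rw [show (x:ℝ) ^ 2 = x ^ (2:ℝ) by rw [← Real.rpow_natCast x 2]; norm_num,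
        ← Real.rpow_mul hx0]
      congr 1; ring
    rw [Real.one_rpow, one_mul, hpow] at hgm
    nlinarith [hgm]
  refine ⟨?_, hA⟩
  -- Part 1 : φ is antitone on [0,1)
  have hden : ∀ x ∈ Set.Ico (0:ℝ) 1, 0 < 2 - x ^ 2 - x ^ p := by
    intro x hx
    obtain ⟨hx0, hx1⟩ := hx
    have h1 : x ^ p ≤ 1 := Real.rpow_le_one hx0 hx1.le hp0.le
    have h2 : x ^ 2 < 1 := by nlinarith
    linarith
  have hint : interior (Set.Ico (0:ℝ) 1) = Set.Ioo 0 1 := interior_Ico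
  -- derivative computation on (0,1)
  have hderiv : ∀ x ∈ Set.Ioo (0:ℝ) 1,
      HasDerivAt (fun x : ℝ => (1 - x ^ p) / (2 - x ^ 2 - x ^ p))
        ((-(p * x ^ (p - 1)) * (2 - x ^ 2 - x ^ p) -
          (1 - x ^ p) * (-(2 * x) - p * x ^ (p - 1))) / (2 - x ^ 2 - x ^ p) ^ 2) x := by
    intro x hx
    obtain ⟨hx0, hx1⟩ := hx
    have hrp : HasDerivAt (fun x : ℝ => x ^ p) (p * x ^ (p - 1)) x :=
      Real.hasDerivAt_rpow_const (Or.inl hx0.ne')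
    have hnum : HasDerivAt (fun x : ℝ => 1 - x ^ p) (-(p * x ^ (p - 1))) x := by
      simpa using (hasDerivAt_const x (1:ℝ)).fun_sub hrp
    have hsq : HasDerivAt (fun x : ℝ => x ^ 2) (2 * x) x := by
      simpa using hasDerivAt_pow 2 x
    have hden' : HasDerivAt (fun x : ℝ => 2 - x ^ 2 - x ^ p) (-(2 * x) - p * x ^ (p - 1)) x := by
      simpa using (((hasDerivAt_const x (2:ℝ)).fun_sub hsq).fun_sub hrp)
    exact hnum.div hden' (hden x ⟨hx0.le, hx1⟩).ne'
  apply antitoneOn_of_deriv_nonpos (convex_Ico 0 1)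
  · -- continuity
    apply ContinuousOn.div
    · apply (continuousOn_const).sub
      intro x hx
      exact (Real.continuousAt_rpow_const x p (Or.inr hp0.le)).continuousWithinAt
    · apply (continuousOn_const.sub (continuousOn_pow 2)).sub
      intro x hx
      exact (Real.continuousAt_rpow_const x p (Or.inr hp0.le)).continuousWithinAt
    · intro x hx
      exact (hden x hx).ne'
  · rw [hint]
    intro x hx
    exact ((hderiv x hx).differentiableAt).differentiableWithinAt
  · rw [hint]
    intro x hx
    obtain ⟨hx0, hx1⟩ := hx
    rw [(hderiv x ⟨hx0, hx1⟩).deriv]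
    apply div_nonpos_of_nonpos_of_nonneg _ (by positivity)
    -- numerator equals x^(p-1) * A(x)
    have key : (-(p * x ^ (p - 1)) * (2 - x ^ 2 - x ^ p) -
          (1 - x ^ p) * (-(2 * x) - p * x ^ (p - 1)))
        = x ^ (p - 1) * (-p - (2 - p) * x ^ 2 + 2 * x ^ (2 - p)) := by
      have h1 : x ^ (p - 1) * x = x ^ p := by
        have h := Real.rpow_add hx0 (p - 1) 1
        rw [Real.rpow_one] at h
        rw [← h]; norm_num
      have h2 : x ^ (p - 1) * x ^ (2 - p) = x := by
        rw [← Real.rpow_add hx0]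
        norm_num
      have h3 : x ^ p * x = x ^ (p - 1) * x ^ 2 := by
        rw [← h1]; ring
      nlinarith [h1, h2, h3]
    rw [key]
    have hxA := hA x ⟨hx0.le, hx1.le⟩
    have hxp : (0:ℝ) ≤ x ^ (p - 1) := Real.rpow_nonneg hx0.le _
    exact mul_nonpos_of_nonneg_of_nonpos hxp hxA
end

section
/- Let f(z) = Σ_{n=0}^∞ a_n z^n be analytic in the unit disk D with Re f(z) < 1 for all z ∈ D and a_0 = f(0) ∈ [0,1) real. Then for every r with 0 ≤ r ≤ 1/3 one has Σ_{n=0}^∞ |a_n| r^n ≤ a_0 + 2(1−a_0) r/(1−r) ≤ 1. -/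
open Metric Complex MeasureTheory intervalIntegral Filter Topology

lemma conj_intInt (g : ℝ → ℂ) (a b : ℝ) :
    (starRingEnd ℂ) (∫ x in a..b, g x) = ∫ x in a..b, (starRingEnd ℂ) (g x) := by
  simp only [intervalIntegral, map_sub, ← integral_conj]


lemma re_intInt (g : ℝ → ℂ) {a b : ℝ} (h : IntervalIntegrable g volume a b) :
    (∫ x in a..b, g x).re = ∫ x in a..b, (g x).re := by
  exact (ContinuousLinearMap.intervalIntegral_comp_comm Complex.reCLM h).symm

set_option maxHeartbeats 1000000 in
lemma summable_aux {a : ℕ → ℂ}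
    (h : ∀ z ∈ Metric.ball (0:ℂ) 1, Summable fun n => a n * z ^ n)
    {ρ : ℝ} (h0 : 0 ≤ ρ) (h1 : ρ < 1) : Summable (fun n => ‖a n‖ * ρ ^ n) := by
  have hρ'0 : 0 < (1 + ρ)/2 := by positivity
  have hρ'1 : (1 + ρ)/2 < 1 := by linarith
  have hρρ' : ρ < (1 + ρ)/2 := by linarith
  have hz : (((1 + ρ)/2 : ℝ) : ℂ) ∈ Metric.ball (0:ℂ) 1 := by
    rw [Metric.mem_ball, dist_zero_right, Complex.norm_real, Real.norm_eq_abs,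
      abs_of_pos hρ'0]
    exact hρ'1
  have hsum := h _ hz
  obtain ⟨C, hC⟩ := hsum.tendsto_atTop_zero.norm.bddAbove_range
  have hC' : ∀ n, ‖a n‖ * ((1 + ρ)/2) ^ n ≤ C := by
    intro n
    have := hC (Set.mem_range_self (f := fun n => ‖a n * (((1 + ρ)/2:ℝ):ℂ) ^ n‖) n)
    rwa [norm_mul, norm_pow, Complex.norm_real, Real.norm_eq_abs, abs_of_pos hρ'0] at this
  apply Summable.of_nonneg_of_le (f := fun n => C * (ρ/((1 + ρ)/2)) ^ n)
    (fun n => by positivity)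
  · intro n
    have h3 : ‖a n‖ * ρ ^ n = (‖a n‖ * ((1 + ρ)/2) ^ n) * (ρ/((1 + ρ)/2)) ^ n := by
      rw [mul_assoc, ← mul_pow, mul_div_cancel₀ _ (by positivity : ((1 + ρ)/2 : ℝ) ≠ 0)]
    rw [h3]
    exact mul_le_mul_of_nonneg_right (hC' n) (by positivity)
  · exact Summable.mul_left _ (summable_geometric_of_lt_one (by positivity)
      ((div_lt_one hρ'0).2 hρρ'))


lemma orth_int (k : ℤ) :
    (∫ θ : ℝ in (0:ℝ)..(2*Real.pi), Complex.exp (k * θ * Complex.I)) =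
      if k = 0 then ((2*Real.pi : ℝ) : ℂ) else 0 := by
  rcases eq_or_ne k 0 with h | h
  · simp [h]
  · rw [if_neg h]
    have hc : (k : ℂ) * Complex.I ≠ 0 := by
      simp [Complex.I_ne_zero, Int.cast_eq_zero, h]
    have := integral_exp_mul_complex (a := 0) (b := 2*Real.pi) hc
    have h2 : ∀ θ : ℝ, (k : ℂ) * θ * Complex.I = ((k:ℂ)*Complex.I) * θ := by
      intro θ; ring
    simp only [h2]
    rw [this]
    have : Complex.exp ((k:ℂ) * Complex.I * (2*Real.pi)) = 1 := by
      rw [show (k:ℂ) * Complex.I * (2*Real.pi) = k * (2*Real.pi*Complex.I) by ring]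
      exact Complex.exp_int_mul_two_pi_mul_I k
    simp [this]

lemma circle_hasSum (f : ℂ → ℂ) (a : ℕ → ℂ)
    (hf : ∀ z ∈ Metric.ball (0:ℂ) 1, HasSum (fun n : ℕ => a n * z ^ n) (f z))
    (hs : ∀ ρ' : ℝ, 0 ≤ ρ' → ρ' < 1 → Summable (fun n => ‖a n‖ * ρ' ^ n))
    {ρ : ℝ} (h0 : 0 ≤ ρ) (h1 : ρ < 1) (k : ℤ) :
    HasSum (fun m : ℕ => a m * ρ ^ m * (if (m : ℤ) + k = 0 then ((2*Real.pi:ℝ):ℂ) else 0))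
      (∫ θ in (0:ℝ)..(2*Real.pi),
        f (ρ * Complex.exp (θ * Complex.I)) * Complex.exp (k * θ * Complex.I)) := by
  have hmem : ∀ θ : ℝ, (ρ : ℂ) * Complex.exp (θ * Complex.I) ∈ Metric.ball (0:ℂ) 1 := by
    intro θ
    have e1 : ‖Complex.exp ((θ:ℂ) * Complex.I)‖ = 1 := by
      rw [Complex.norm_exp]; simp
    rw [Metric.mem_ball, dist_zero_right, norm_mul, Complex.norm_real, Real.norm_eq_abs,
      _root_.abs_of_nonneg h0, e1, mul_one]
    exact h1
  have key : HasSum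
      (fun m : ℕ => ∫ θ in (0:ℝ)..(2*Real.pi),
        a m * ((ρ:ℂ) * Complex.exp (θ * Complex.I)) ^ m * Complex.exp (k * θ * Complex.I))
      (∫ θ in (0:ℝ)..(2*Real.pi),
        f (ρ * Complex.exp (θ * Complex.I)) * Complex.exp (k * θ * Complex.I)) := by
    apply intervalIntegral.hasSum_integral_of_dominated_convergence
      (bound := fun m _ => ‖a m‖ * ρ ^ m)
    · intro m
      apply Continuous.aestronglyMeasurable
      fun_prop
    · intro m
      filter_upwards with θ _
      have e1 : ‖Complex.exp ((θ:ℂ) * Complex.I)‖ = 1 := by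
        rw [Complex.norm_exp]; simp
      have e2 : ‖Complex.exp ((k:ℂ) * θ * Complex.I)‖ = 1 := by
        rw [Complex.norm_exp]; simp
      rw [norm_mul, norm_mul, norm_pow, norm_mul, Complex.norm_real, Real.norm_eq_abs,
        _root_.abs_of_nonneg h0, e1, e2, mul_one, mul_one]
    · filter_upwards with θ _
      exact hs ρ h0 h1
    · exact intervalIntegrable_const
    · filter_upwards with θ _
      exact (hf _ (hmem θ)).mul_right _
  convert key using 2 with m
  have hterm : ∀ θ : ℝ,
      a m * ((ρ:ℂ) * Complex.exp (θ * Complex.I)) ^ m * Complex.exp (k * θ * Complex.I)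
        = (a m * ρ ^ m) * Complex.exp (((m:ℤ) + k : ℤ) * θ * Complex.I) := by
    intro θ
    have hE : Complex.exp ((m:ℂ) * ((θ:ℂ) * Complex.I)) * Complex.exp (k * θ * Complex.I)
        = Complex.exp (((m:ℤ) + k : ℤ) * θ * Complex.I) := by
      rw [← Complex.exp_add]; congr 1; push_cast; ring
    rw [mul_pow, ← Complex.exp_nat_mul]
    linear_combination a m * (ρ:ℂ) ^ m * hE
  simp only [hterm]
  rw [intervalIntegral.integral_const_mul, orth_int]

lemma conj_intervalIntegrable {g : ℝ → ℂ} {a b : ℝ}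
    (h : IntervalIntegrable g volume a b) :
    IntervalIntegrable (fun x => (starRingEnd ℂ) (g x)) volume a b := by
  constructor
  · exact (Complex.conjCLE.toContinuousLinearEquiv.toContinuousLinearMap).integrable_comp h.1
  · exact (Complex.conjCLE.toContinuousLinearEquiv.toContinuousLinearMap).integrable_comp h.2

set_option maxHeartbeats 1600000 in
lemma coeff_bound (f : ℂ → ℂ) (a : ℕ → ℂ) (a₀ : ℝ)
    (hf : ∀ z ∈ Metric.ball (0 : ℂ) 1, HasSum (fun n : ℕ => a n * z ^ n) (f z))
    (hre : ∀ z ∈ Metric.ball (0 : ℂ) 1, (f z).re < 1)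
    (ha₀ : a 0 = (a₀ : ℂ))
    (n : ℕ) (hn : 1 ≤ n) : ‖a n‖ ≤ 2 * (1 - a₀) := by
  have hs : ∀ ρ' : ℝ, 0 ≤ ρ' → ρ' < 1 → Summable (fun m => ‖a m‖ * ρ' ^ m) :=
    fun ρ' h0 h1 => summable_aux (fun z hz => (hf z hz).summable) h0 h1
  have hπ : (0:ℝ) < Real.pi := Real.pi_pos
  have main : ∀ ρ : ℝ, 0 ≤ ρ → ρ < 1 → ‖a n‖ * ρ ^ n ≤ 2 * (1 - a₀) := by
    intro ρ h0 h1
    have hmem : ∀ θ : ℝ, (ρ : ℂ) * Complex.exp (θ * Complex.I) ∈ Metric.ball (0:ℂ) 1 := by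
      intro θ
      have e1 : ‖Complex.exp ((θ:ℂ) * Complex.I)‖ = 1 := by
        rw [Complex.norm_exp]; simp
      rw [Metric.mem_ball, dist_zero_right, norm_mul, Complex.norm_real, Real.norm_eq_abs,
        _root_.abs_of_nonneg h0, e1, mul_one]
      exact h1
    have hznorm : ∀ (θ : ℝ) (m : ℕ),
        ‖a m * ((ρ:ℂ) * Complex.exp ((θ:ℂ) * Complex.I)) ^ m‖ = ‖a m‖ * ρ ^ m := by
      intro θ m
      have e1 : ‖Complex.exp ((θ:ℂ) * Complex.I)‖ = 1 := by
        rw [Complex.norm_exp]; simp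
      rw [norm_mul, norm_pow, norm_mul, Complex.norm_real, Real.norm_eq_abs,
        _root_.abs_of_nonneg h0, e1, mul_one]
    -- integrability of θ ↦ f(z θ)
    have hInt_f : IntervalIntegrable (fun θ : ℝ => f ((ρ:ℂ) * Complex.exp (θ * Complex.I)))
        volume 0 (2*Real.pi) := by
      rw [intervalIntegrable_iff]
      haveI : IsFiniteMeasure (volume.restrict (Set.uIoc (0:ℝ) (2*Real.pi))) := by
        constructor
        rw [Measure.restrict_apply_univ, Set.uIoc_of_le (by positivity : (0:ℝ) ≤ 2*Real.pi)]
        exact measure_Ioc_lt_top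
      have hmeas : AEStronglyMeasurable
          (fun θ : ℝ => f ((ρ:ℂ) * Complex.exp (θ * Complex.I)))
          (volume.restrict (Set.uIoc (0:ℝ) (2*Real.pi))) := by
        apply aestronglyMeasurable_of_tendsto_ae (u := atTop)
          (f := fun N (θ:ℝ) => ∑ m ∈ Finset.range N, a m * ((ρ:ℂ) * Complex.exp (θ * Complex.I)) ^ m)
        · intro N
          apply Continuous.aestronglyMeasurable
          fun_prop
        · filter_upwards with θ
          exact (hf _ (hmem θ)).tendsto_sum_nat
      apply Integrable.mono' (integrable_const (∑' m, ‖a m‖ * ρ ^ m)) hmeas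
      filter_upwards with θ
      calc ‖f ((ρ:ℂ) * Complex.exp (θ * Complex.I))‖
          = ‖∑' m, a m * ((ρ:ℂ) * Complex.exp (θ * Complex.I)) ^ m‖ := by
            rw [(hf _ (hmem θ)).tsum_eq]
        _ ≤ ∑' m, ‖a m * ((ρ:ℂ) * Complex.exp (θ * Complex.I)) ^ m‖ :=
            norm_tsum_le_tsum_norm ((hs ρ h0 h1).congr fun m => (hznorm θ m).symm)
        _ = ∑' m, ‖a m‖ * ρ ^ m := tsum_congr (hznorm θ)
    have hcont_exp : ∀ k : ℤ, Continuous fun θ : ℝ => Complex.exp (k * θ * Complex.I) := by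
      intro k; fun_prop
    have hInt_fe : ∀ k : ℤ, IntervalIntegrable
        (fun θ : ℝ => f ((ρ:ℂ) * Complex.exp (θ * Complex.I)) * Complex.exp (k * θ * Complex.I))
        volume 0 (2*Real.pi) :=
      fun k => hInt_f.mul_continuousOn (hcont_exp k).continuousOn
    have hInt_g : IntervalIntegrable
        (fun θ : ℝ => 1 - f ((ρ:ℂ) * Complex.exp (θ * Complex.I))) volume 0 (2*Real.pi) :=
      intervalIntegrable_const.sub hInt_f
    have hInt_ge : ∀ k : ℤ, IntervalIntegrable
        (fun θ : ℝ => (1 - f ((ρ:ℂ) * Complex.exp (θ * Complex.I))) * Complex.exp (k * θ * Complex.I))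
        volume 0 (2*Real.pi) :=
      fun k => hInt_g.mul_continuousOn (hcont_exp k).continuousOn
    -- value of ∫ f
    have I0 : (∫ θ in (0:ℝ)..(2*Real.pi),
        f ((ρ:ℂ) * Complex.exp (θ * Complex.I)) * Complex.exp (((0:ℤ):ℂ) * θ * Complex.I))
        = (a₀ : ℂ) * (2*Real.pi) := by
      have H := circle_hasSum f a hf hs h0 h1 0
      have heq : (fun m : ℕ => a m * (ρ:ℂ) ^ m * (if (m : ℤ) + 0 = 0 then ((2*Real.pi:ℝ):ℂ) else 0))
          = fun m : ℕ => if m = 0 then (a₀:ℂ) * (2*Real.pi) else 0 := by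
        funext m
        rcases eq_or_ne m 0 with hm | hm
        · subst hm; simp [ha₀]
        · have : ((m:ℤ) + 0 ≠ 0) := by omega
          simp [hm, this]
      rw [heq] at H
      exact (H.unique (hasSum_ite_eq 0 _))
    have Ineg : (∫ θ in (0:ℝ)..(2*Real.pi),
        f ((ρ:ℂ) * Complex.exp (θ * Complex.I)) * Complex.exp ((-(n:ℂ)) * θ * Complex.I))
        = a n * (ρ:ℂ) ^ n * (2*Real.pi) := by
      have H := circle_hasSum f a hf hs h0 h1 (-(n:ℤ))
      have heq : (fun m : ℕ => a m * (ρ:ℂ) ^ m *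
          (if (m : ℤ) + -(n:ℤ) = 0 then ((2*Real.pi:ℝ):ℂ) else 0))
          = fun m : ℕ => if m = n then a n * (ρ:ℂ) ^ n * (2*Real.pi) else 0 := by
        funext m
        rcases eq_or_ne m n with hm | hm
        · subst hm; simp
        · have : ((m:ℤ) + -(n:ℤ) ≠ 0) := by omega
          simp [hm, this]
      rw [heq] at H
      push_cast at H
      exact (H.unique (hasSum_ite_eq n _))
    have Ipos : (∫ θ in (0:ℝ)..(2*Real.pi),
        f ((ρ:ℂ) * Complex.exp (θ * Complex.I)) * Complex.exp (((n:ℂ)) * θ * Complex.I))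
        = 0 := by
      have H := circle_hasSum f a hf hs h0 h1 (n:ℤ)
      have heq : (fun m : ℕ => a m * (ρ:ℂ) ^ m *
          (if (m : ℤ) + (n:ℤ) = 0 then ((2*Real.pi:ℝ):ℂ) else 0))
          = fun _ : ℕ => (0:ℂ) := by
        funext m
        have : ((m:ℤ) + (n:ℤ) ≠ 0) := by omega
        simp [this]
      rw [heq] at H
      exact (H.unique hasSum_zero)
    -- A = ∫ (1 - f) e^{-inθ}
    have hA : (∫ θ in (0:ℝ)..(2*Real.pi),
        (1 - f ((ρ:ℂ) * Complex.exp (θ * Complex.I))) * Complex.exp ((-(n:ℂ)) * θ * Complex.I))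
        = -(a n * (ρ:ℂ) ^ n * (2*Real.pi)) := by
      have hsplit : (fun θ : ℝ => (1 - f ((ρ:ℂ) * Complex.exp (θ * Complex.I))) *
          Complex.exp ((-(n:ℂ)) * θ * Complex.I))
          = fun θ : ℝ => Complex.exp ((-(n:ℂ)) * θ * Complex.I) -
            f ((ρ:ℂ) * Complex.exp (θ * Complex.I)) * Complex.exp ((-(n:ℂ)) * θ * Complex.I) := by
        funext θ; ring
      have e0 := orth_int (-(n:ℤ))
      rw [if_neg (by omega : -(n:ℤ) ≠ 0)] at e0
      push_cast at e0
      have hint1 := (hcont_exp (-(n:ℤ))).intervalIntegrable (μ := volume) 0 (2*Real.pi)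
      have hint2 := hInt_fe (-(n:ℤ))
      push_cast at hint1 hint2
      have Ineg' := Ineg
      push_cast at Ineg'
      rw [hsplit, intervalIntegral.integral_sub hint1 hint2, e0, Ineg', zero_sub]
    have hB : (∫ θ in (0:ℝ)..(2*Real.pi),
        (1 - f ((ρ:ℂ) * Complex.exp (θ * Complex.I))) * Complex.exp (((n:ℂ)) * θ * Complex.I))
        = 0 := by
      have hsplit : (fun θ : ℝ => (1 - f ((ρ:ℂ) * Complex.exp (θ * Complex.I))) *
          Complex.exp (((n:ℂ)) * θ * Complex.I))
          = fun θ : ℝ => Complex.exp (((n:ℂ)) * θ * Complex.I) -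
            f ((ρ:ℂ) * Complex.exp (θ * Complex.I)) * Complex.exp (((n:ℂ)) * θ * Complex.I) := by
        funext θ; ring
      have e0 := orth_int ((n:ℤ))
      rw [if_neg (by omega : (n:ℤ) ≠ 0)] at e0
      push_cast at e0
      have hint1 := (hcont_exp ((n:ℤ))).intervalIntegrable (μ := volume) 0 (2*Real.pi)
      have hint2 := hInt_fe ((n:ℤ))
      push_cast at hint1 hint2
      have Ipos' := Ipos
      push_cast at Ipos'
      rw [hsplit, intervalIntegral.integral_sub hint1 hint2, e0, Ipos', sub_zero]
    have hconjB : (∫ θ in (0:ℝ)..(2*Real.pi),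
        (starRingEnd ℂ) ((1 - f ((ρ:ℂ) * Complex.exp (θ * Complex.I))) *
          Complex.exp (((n:ℂ)) * θ * Complex.I))) = 0 := by
      rw [← conj_intInt, hB, map_zero]
    -- pointwise identity
    have hpt : ∀ θ : ℝ,
        ((2 * (1 - (f ((ρ:ℂ) * Complex.exp (θ * Complex.I))).re) : ℝ) : ℂ) *
            Complex.exp ((-(n:ℂ)) * θ * Complex.I)
          = (1 - f ((ρ:ℂ) * Complex.exp (θ * Complex.I))) *
              Complex.exp ((-(n:ℂ)) * θ * Complex.I)
            + (starRingEnd ℂ) ((1 - f ((ρ:ℂ) * Complex.exp (θ * Complex.I))) *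
              Complex.exp (((n:ℂ)) * θ * Complex.I)) := by
      intro θ
      have hce : (starRingEnd ℂ) (Complex.exp (((n:ℂ)) * θ * Complex.I))
          = Complex.exp ((-(n:ℂ)) * θ * Complex.I) := by
        rw [← Complex.exp_conj]
        congr 1
        rw [map_mul, map_mul, Complex.conj_I, Complex.conj_ofReal, map_natCast]
        ring
      rw [map_mul, hce, ← add_mul]
      congr 1
      rw [Complex.add_conj]
      push_cast
      simp [Complex.sub_re, Complex.one_re]
    -- C = A
    have hC : (∫ θ in (0:ℝ)..(2*Real.pi),
        ((2 * (1 - (f ((ρ:ℂ) * Complex.exp (θ * Complex.I))).re) : ℝ) : ℂ) *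
          Complex.exp ((-(n:ℂ)) * θ * Complex.I))
        = -(a n * (ρ:ℂ) ^ n * (2*Real.pi)) := by
      rw [show (fun θ : ℝ => ((2 * (1 - (f ((ρ:ℂ) * Complex.exp (θ * Complex.I))).re) : ℝ) : ℂ) *
          Complex.exp ((-(n:ℂ)) * θ * Complex.I)) = _ from funext hpt,
        intervalIntegral.integral_add ?h1 ?h2, hA, hconjB, add_zero]
      case h1 =>
        have := hInt_ge (-(n:ℤ)); push_cast at this; exact this
      case h2 =>
        have := conj_intervalIntegrable (hInt_ge ((n:ℤ))); push_cast at this; exact this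
    -- norm bound
    have hre' : ∀ θ : ℝ, (f ((ρ:ℂ) * Complex.exp (θ * Complex.I))).re < 1 :=
      fun θ => hre _ (hmem θ)
    have hnormC : ‖a n‖ * ρ ^ n * (2*Real.pi) ≤
        ∫ θ in (0:ℝ)..(2*Real.pi),
          2 * (1 - (f ((ρ:ℂ) * Complex.exp (θ * Complex.I))).re) := by
      have h1' := intervalIntegral.norm_integral_le_integral_norm (μ := volume)
        (f := fun θ : ℝ => ((2 * (1 - (f ((ρ:ℂ) * Complex.exp (θ * Complex.I))).re) : ℝ) : ℂ) *
          Complex.exp ((-(n:ℂ)) * θ * Complex.I)) (by positivity : (0:ℝ) ≤ 2*Real.pi)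
      rw [hC] at h1'
      have h2' : ‖-(a n * (ρ:ℂ) ^ n * (2 * (Real.pi:ℂ)))‖ = ‖a n‖ * ρ ^ n * (2*Real.pi) := by
        rw [norm_neg]
        simp only [norm_mul, norm_pow, Complex.norm_real, Real.norm_eq_abs]
        rw [_root_.abs_of_nonneg h0, _root_.abs_of_nonneg hπ.le]
        norm_num
      rw [h2'] at h1'
      refine h1'.trans (le_of_eq (intervalIntegral.integral_congr fun θ _ => ?_))
      have e2 : ‖Complex.exp ((-(n:ℂ)) * θ * Complex.I)‖ = 1 := by
        rw [Complex.norm_exp]; simp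
      rw [norm_mul, e2, mul_one, Complex.norm_real, Real.norm_eq_abs,
        _root_.abs_of_nonneg (by nlinarith [hre' θ] : (0:ℝ) ≤ 2 * (1 - (f ((ρ:ℂ) * Complex.exp (θ * Complex.I))).re))]
    -- compute RHS integral
    have hD : (∫ θ in (0:ℝ)..(2*Real.pi),
        2 * (1 - (f ((ρ:ℂ) * Complex.exp (θ * Complex.I))).re))
        = 2 * ((2*Real.pi) * (1 - a₀)) := by
      rw [intervalIntegral.integral_const_mul]
      have : (∫ θ in (0:ℝ)..(2*Real.pi), (1 - (f ((ρ:ℂ) * Complex.exp (θ * Complex.I))).re))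
          = (2*Real.pi) * (1 - a₀) := by
        have hre_eq : (∫ θ in (0:ℝ)..(2*Real.pi),
            (1 - (f ((ρ:ℂ) * Complex.exp (θ * Complex.I))).re))
            = (∫ θ in (0:ℝ)..(2*Real.pi), (1 - f ((ρ:ℂ) * Complex.exp (θ * Complex.I)))).re := by
          rw [re_intInt _ hInt_g]
          exact intervalIntegral.integral_congr fun θ _ => by simp
        rw [hre_eq, intervalIntegral.integral_sub intervalIntegrable_const hInt_f]
        have hI0' : (∫ θ in (0:ℝ)..(2*Real.pi), f ((ρ:ℂ) * Complex.exp (θ * Complex.I)))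
            = (a₀ : ℂ) * (2*Real.pi) := by
          rw [← I0]
          exact intervalIntegral.integral_congr fun θ _ => by simp
        rw [hI0']
        simp only [intervalIntegral.integral_const, smul_eq_mul, Complex.sub_re,
          Complex.mul_re, Complex.ofReal_re, Complex.ofReal_im]
        simp
        ring
      rw [this]
    rw [hD] at hnormC
    nlinarith [hnormC, hπ]
  have hlim : Tendsto (fun ρ : ℝ => ‖a n‖ * ρ ^ n) (𝓝[<] (1:ℝ)) (𝓝 (‖a n‖ * 1 ^ n)) :=
    ((continuous_const.mul (continuous_pow n)).tendsto 1).mono_left nhdsWithin_le_nhds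
  have hev : ∀ᶠ ρ in 𝓝[<] (1:ℝ), ‖a n‖ * ρ ^ n ≤ 2 * (1 - a₀) := by
    filter_upwards [Ico_mem_nhdsLT (by norm_num : (0:ℝ) < 1)] with ρ hρ
    exact main ρ hρ.1 hρ.2
  have hfin := le_of_tendsto hlim hev
  simpa using hfin

/-- If `f(z) = Σ aₙ zⁿ` is analytic in the unit disk with `Re f(z) < 1` there and
`a₀ = f(0) ∈ [0,1)` real, then for every `0 ≤ r ≤ 1/3` one has
`Σ |aₙ| rⁿ ≤ a₀ + 2(1−a₀) r/(1−r) ≤ 1`. -/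
theorem bohr_re_lt_one
    (f : ℂ → ℂ) (a : ℕ → ℂ) (a₀ : ℝ)
    (hf : ∀ z ∈ ball (0 : ℂ) 1, HasSum (fun n : ℕ => a n * z ^ n) (f z))
    (hre : ∀ z ∈ ball (0 : ℂ) 1, (f z).re < 1)
    (ha₀ : a 0 = (a₀ : ℂ)) (h0 : 0 ≤ a₀) (h1 : a₀ < 1)
    (r : ℝ) (hr0 : 0 ≤ r) (hr : r ≤ 1 / 3) :
    (∑' n : ℕ, ‖a n‖ * r ^ n) ≤ a₀ + 2 * (1 - a₀) * r / (1 - r) ∧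
      a₀ + 2 * (1 - a₀) * r / (1 - r) ≤ 1 := by
  have hr1 : r < 1 := by linarith
  have hrr : (0:ℝ) < 1 - r := by linarith
  constructor
  · have hsum : Summable (fun n => ‖a n‖ * r ^ n) :=
      summable_aux (fun z hz => (hf z hz).summable) hr0 hr1
    have habs : (∑' n : ℕ, ‖a n‖ * r ^ n) = ∑' n : ℕ, ‖a n‖ * r ^ n := by
      rfl
    rw [habs, hsum.tsum_eq_zero_add]
    have h00 : ‖a 0‖ * r ^ 0 = a₀ := by
      rw [ha₀, pow_zero, mul_one, Complex.norm_real, Real.norm_eq_abs, _root_.abs_of_nonneg h0]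
    rw [h00]
    have hgeom : Summable (fun n : ℕ => 2 * (1 - a₀) * r ^ (n+1)) := by
      apply Summable.mul_left
      exact (summable_geometric_of_lt_one hr0 hr1).comp_injective (add_left_injective 1)
    have hle : (∑' n : ℕ, ‖a (n+1)‖ * r ^ (n+1)) ≤ ∑' n : ℕ, 2 * (1 - a₀) * r ^ (n+1) := by
      apply Summable.tsum_le_tsum _ (hsum.comp_injective (add_left_injective 1)) hgeom
      intro n
      exact mul_le_mul_of_nonneg_right (coeff_bound f a a₀ hf hre ha₀ (n+1) (by omega))
        (by positivity)
    have hval : (∑' n : ℕ, 2 * (1 - a₀) * r ^ (n+1)) = 2 * (1 - a₀) * r / (1 - r) := by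
      have : ∀ n : ℕ, 2 * (1 - a₀) * r ^ (n+1) = (2 * (1 - a₀) * r) * r ^ n := by
        intro n; ring
      rw [tsum_congr this, tsum_mul_left, tsum_geometric_of_lt_one hr0 hr1]
      field_simp
    linarith [hle, hval.symm ▸ hle]
  · have hkey : 2 * (1 - a₀) * r / (1 - r) ≤ 1 - a₀ := by
      rw [div_le_iff₀ hrr]
      nlinarith
    linarith
end

section
/- Let f(z) = Σ_{n=0}^∞ a_n z^n be analytic in the unit disk D with a_0 ∈ (0,1) real and Re f(z) < 1 for all z ∈ D. Then Σ_{n=0}^∞ |a_n| r^n + (1/(1+a_0) + r/(1−r)) · Σ_{n=1}^∞ |a_n|² r^{2n} ≤ 1 holds for all r with 0 ≤ r ≤ r_*, where r_* ≈ 0.24683 is the unique root in the interval (0,1) of the equation 3r³ − 5r² − 3r + 1 = 0. -/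
set_option maxHeartbeats 1000000

open Metric Complex Finset Filter
open scoped Real Topology

lemma exp_sum_root (N : ℕ) (hN : 0 < N) (j : ℤ) :
    ∑ k ∈ Finset.range N, Complex.exp (((2 * π * j * k / N : ℝ)) * Complex.I)
      = if (N : ℤ) ∣ j then (N : ℂ) else 0 := by
  have hNR : (N : ℝ) ≠ 0 := Nat.cast_ne_zero.mpr hN.ne'
  have hNC : (N : ℂ) ≠ 0 := Nat.cast_ne_zero.mpr hN.ne'
  set x : ℂ := Complex.exp (((2 * π * j / N : ℝ)) * Complex.I) with hx
  have hxk : ∀ k : ℕ, Complex.exp (((2 * π * j * k / N : ℝ)) * Complex.I) = x ^ k := by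
    intro k
    rw [hx, ← Complex.exp_nat_mul]
    congr 1
    push_cast
    ring
  simp_rw [hxk]
  by_cases hdvd : (N : ℤ) ∣ j
  · obtain ⟨c, hc⟩ := hdvd
    have hx1 : x = 1 := by
      rw [hx, hc]
      rw [show (((2 * π * ((N : ℤ) * c : ℤ) / N : ℝ)) : ℂ) * Complex.I
            = (c : ℤ) * (2 * π * Complex.I) by push_cast; field_simp]
      exact Complex.exp_int_mul_two_pi_mul_I c
    rw [if_pos ⟨c, hc⟩]
    simp [hx1]
  · have hx1 : x ≠ 1 := by
      intro hx1
      rw [hx, Complex.exp_eq_one_iff] at hx1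
      obtain ⟨d, hd⟩ := hx1
      have : (2 * π * j / N : ℝ) = d * (2 * π) := by
        have := hd
        rw [show (d : ℂ) * (2 * ↑π * Complex.I) = ((d * (2 * π) : ℝ) : ℂ) * Complex.I by
          push_cast; ring] at this
        exact_mod_cast Complex.ofReal_inj.mp (mul_right_cancel₀ Complex.I_ne_zero this)
      have hj : (j : ℝ) = d * N := by
        field_simp at this
        nlinarith [Real.pi_pos, this]
      refine hdvd ⟨d, ?_⟩
      have : (j : ℝ) = ((N : ℤ) * d : ℤ) := by push_cast; linarith [hj]
      exact_mod_cast this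
    have hxN : x ^ N = 1 := by
      rw [hx, ← Complex.exp_nat_mul]
      rw [show (N : ℂ) * (((2 * π * j / N : ℝ)) * Complex.I) = (j : ℤ) * (2 * π * Complex.I) by
        push_cast; field_simp]
      exact Complex.exp_int_mul_two_pi_mul_I j
    rw [geom_sum_eq hx1, hxN]
    simp [hdvd]

lemma summable_abs_coeff {f : ℂ → ℂ} {a : ℕ → ℂ}
    (hf : ∀ z ∈ ball (0 : ℂ) 1, HasSum (fun n : ℕ => a n * z ^ n) (f z))
    {ρ : ℝ} (hρ0 : 0 ≤ ρ) (hρ1 : ρ < 1) :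
    Summable (fun m : ℕ => ‖a m‖ * ρ ^ m) := by
  set σ : ℝ := (1 + ρ) / 2 with hσ
  have hσ0 : 0 < σ := by positivity
  have hσ1 : σ < 1 := by simp only [hσ]; linarith
  have hρσ : ρ < σ := by simp only [hσ]; linarith
  have hz : (σ : ℂ) ∈ ball (0 : ℂ) 1 := by
    simp [Complex.dist_eq, Complex.norm_real, Real.norm_eq_abs, abs_of_pos hσ0, hσ1]
  have hs := (hf _ hz).summable
  have htend : Tendsto (fun m : ℕ => ‖a m * (σ : ℂ) ^ m‖) atTop (𝓝 0) := by
    simpa using hs.tendsto_atTop_zero.norm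
  obtain ⟨C, hC⟩ := htend.bddAbove_range
  have hC' : ∀ m, ‖a m‖ * σ ^ m ≤ C := by
    intro m
    have := hC (Set.mem_range_self m)
    simpa [Complex.norm_real, Real.norm_eq_abs, abs_of_pos hσ0, mul_pow, _root_.abs_of_nonneg hσ0.le] using this
  have hq0 : 0 ≤ ρ / σ := by positivity
  have hq1 : ρ / σ < 1 := (div_lt_one hσ0).mpr hρσ
  refine Summable.of_nonneg_of_le (fun m => by positivity) (fun m => ?_)
    ((summable_geometric_of_lt_one hq0 hq1).mul_left C)
  have key : ‖a m‖ * ρ ^ m = (‖a m‖ * σ ^ m) * (ρ / σ) ^ m := by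
    rw [mul_assoc, ← mul_pow, mul_div_cancel₀ _ hσ0.ne']
  rw [key]
  exact mul_le_mul_of_nonneg_right (hC' m) (by positivity)

lemma coeff_abs_le {f : ℂ → ℂ} {a : ℕ → ℂ} {a₀ : ℝ}
    (hf : ∀ z ∈ ball (0 : ℂ) 1, HasSum (fun n : ℕ => a n * z ^ n) (f z))
    (hre : ∀ z ∈ ball (0 : ℂ) 1, (f z).re < 1)
    (ha₀ : a 0 = (a₀ : ℂ)) (h1 : a₀ < 1) (n : ℕ) (hn : n ≠ 0) :
    ‖a n‖ ≤ 2 * (1 - a₀) := by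
  by_cases han : a n = 0
  · simp [han]; linarith
  have habspos : 0 < ‖a n‖ := norm_pos_iff.mpr han
  set l : ℂ := (starRingEnd ℂ) (a n) / (‖a n‖ : ℂ) with hl
  have hl_abs : ‖l‖ = 1 := by
    rw [hl, norm_div, Complex.norm_conj, Complex.norm_real, Real.norm_eq_abs,
      _root_.abs_of_pos habspos, div_self habspos.ne']
  have hl_an : l * a n = (‖a n‖ : ℂ) := by
    have hC : (‖a n‖ : ℂ) ≠ 0 := by exact_mod_cast habspos.ne'
    rw [hl]
    field_simp
    rw [mul_comm, Complex.mul_conj, Complex.normSq_eq_norm_sq]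
    push_cast
    ring
  have hlconj_abs : ‖(starRingEnd ℂ) l‖ = 1 := by rw [Complex.norm_conj, hl_abs]
  suffices key : ∀ ρ : ℝ, 0 < ρ → ρ < 1 → ‖a n‖ * ρ ^ n ≤ 2 * (1 - a₀) by
    have hcont : Tendsto (fun ρ : ℝ => ‖a n‖ * ρ ^ n) (𝓝[<] (1 : ℝ))
        (𝓝 (‖a n‖ * 1 ^ n)) :=
      (Continuous.tendsto (by continuity) 1).mono_left nhdsWithin_le_nhds
    have hev : ∀ᶠ ρ in 𝓝[<] (1 : ℝ), ‖a n‖ * ρ ^ n ≤ 2 * (1 - a₀) := by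
      filter_upwards [Ioo_mem_nhdsLT_of_mem
        (show (1 : ℝ) ∈ Set.Ioc 0 1 by constructor <;> norm_num)] with ρ hρ
      exact key ρ hρ.1 hρ.2
    have := le_of_tendsto hcont hev
    simpa using this
  intro ρ hρ0 hρ1
  have hS : Summable (fun m : ℕ => ‖a m‖ * ρ ^ m) :=
    summable_abs_coeff hf hρ0.le hρ1
  refine le_of_forall_pos_le_add fun ε hε => ?_
  have htail : Tendsto (fun K : ℕ => ∑' m : ℕ, ‖a (m + K)‖ * ρ ^ (m + K))
      atTop (𝓝 0) := tendsto_sum_nat_add (fun m => ‖a m‖ * ρ ^ m)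
  obtain ⟨K₀, hK₀⟩ := eventually_atTop.mp
    (htail.eventually_lt_const (show (0:ℝ) < ε/4 by positivity))
  set K : ℕ := max (n + 1) K₀ with hK
  set N : ℕ := K + n with hN
  have hKn : n + 1 ≤ K := le_max_left _ _
  have hNpos : 0 < N := by omega
  have hnN : n < N := by omega
  have h2nN : 2 * n < N := by omega
  have hKN : K ≤ N := by omega
  have hNC : (N : ℂ) ≠ 0 := Nat.cast_ne_zero.mpr hNpos.ne'
  have hndvd : ∀ j : ℤ, j ≠ 0 → j.natAbs < N → ¬ (N : ℤ) ∣ j := by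
    intro j hj0 hjN hdvd
    have h1 : N ∣ j.natAbs := by
      have := Int.natAbs_dvd_natAbs.mpr hdvd
      simpa using this
    have := Nat.le_of_dvd (Int.natAbs_pos.mpr hj0) h1
    omega
  set E : ℤ → ℕ → ℂ := fun j k => Complex.exp (((2 * π * j * k / N : ℝ)) * Complex.I) with hE
  set z : ℕ → ℂ := fun k => (ρ : ℂ) * E 1 k with hz
  set W : ℕ → ℂ := fun k => 2 + l * E (-(n : ℤ)) k + (starRingEnd ℂ) l * E (n : ℤ) k with hW
  set D : ℕ → ℂ := fun m => (if (N : ℤ) ∣ (m : ℤ) then 2 else 0)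
    + (if (N : ℤ) ∣ ((m : ℤ) - n) then l else 0)
    + (if (N : ℤ) ∣ ((m : ℤ) + n) then (starRingEnd ℂ) l else 0) with hD
  set g : ℕ → ℂ := fun m => D m * (a m * (ρ : ℂ) ^ m) with hg
  have hEabs : ∀ (j : ℤ) (k : ℕ), ‖E j k‖ = 1 := fun j k =>
    Complex.norm_exp_ofReal_mul_I _
  have hEmul : ∀ (j j' : ℤ) (k : ℕ), E j k * E j' k = E (j + j') k := by
    intro j j' k
    simp only [hE]
    rw [← Complex.exp_add]
    congr 1
    push_cast
    ring
  have hEconj : ∀ (j : ℤ) (k : ℕ), (starRingEnd ℂ) (E j k) = E (-j) k := by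
    intro j k
    simp only [hE]
    rw [← Complex.exp_conj, map_mul, Complex.conj_ofReal, Complex.conj_I]
    congr 1
    push_cast
    ring
  have hEpow : ∀ (k m : ℕ), E 1 k ^ m = E (m : ℤ) k := by
    intro k m
    simp only [hE]
    rw [← Complex.exp_nat_mul]
    congr 1
    push_cast
    ring
  have hEsum : ∀ j : ℤ, ∑ k ∈ range N, E j k = if (N : ℤ) ∣ j then (N : ℂ) else 0 :=
    fun j => exp_sum_root N hNpos j
  have hz_mem : ∀ k, z k ∈ ball (0 : ℂ) 1 := by
    intro k
    simp only [hz, mem_ball, Complex.dist_eq, sub_zero, norm_mul, hEabs,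
      Complex.norm_real, Real.norm_eq_abs, _root_.abs_of_pos hρ0, mul_one]
    exact hρ1
  have hzpow : ∀ (k m : ℕ), z k ^ m = (ρ : ℂ) ^ m * E (m : ℤ) k := by
    intro k m
    simp only [hz]
    rw [mul_pow, hEpow]
  -- HasSum machinery
  have hk : ∀ k, HasSum (fun m => W k * (a m * z k ^ m)) (W k * f (z k)) :=
    fun k => (hf _ (hz_mem k)).mul_left _
  have hsumk : HasSum (fun m => ∑ k ∈ range N, W k * (a m * z k ^ m))
      (∑ k ∈ range N, W k * f (z k)) := hasSum_sum fun k _ => hk k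
  have inner : ∀ m, ∑ k ∈ range N, W k * (a m * z k ^ m) = (N : ℂ) * g m := by
    intro m
    have step : ∀ k, W k * (a m * z k ^ m)
        = (a m * (ρ:ℂ)^m * 2) * E (m : ℤ) k + (a m * (ρ:ℂ)^m * l) * E ((m : ℤ) - n) k
          + (a m * (ρ:ℂ)^m * (starRingEnd ℂ) l) * E ((m : ℤ) + n) k := by
      intro k
      have e1 : E (-(n:ℤ)) k * E (m:ℤ) k = E ((m:ℤ) - n) k := by
        rw [hEmul, show -(n:ℤ) + m = (m:ℤ) - n by ring]
      have e2 : E (n:ℤ) k * E (m:ℤ) k = E ((m:ℤ) + n) k := by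
        rw [hEmul, show (n:ℤ) + m = (m:ℤ) + n by ring]
      calc W k * (a m * z k ^ m)
          = (a m * (ρ:ℂ)^m * 2) * E (m:ℤ) k + (a m * (ρ:ℂ)^m * l) * (E (-(n:ℤ)) k * E (m:ℤ) k)
            + (a m * (ρ:ℂ)^m * (starRingEnd ℂ) l) * (E (n:ℤ) k * E (m:ℤ) k) := by
            rw [hzpow]; simp only [hW]; ring
        _ = _ := by rw [e1, e2]
    rw [Finset.sum_congr rfl (fun k _ => step k)]
    rw [Finset.sum_add_distrib, Finset.sum_add_distrib,
      ← Finset.mul_sum, ← Finset.mul_sum, ← Finset.mul_sum, hEsum, hEsum, hEsum]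
    simp only [hg, hD]
    split_ifs <;> ring
  have hG : HasSum (fun m => (N : ℂ) * g m) (∑ k ∈ range N, W k * f (z k)) := by
    rwa [funext inner] at hsumk
  have hgsummable : Summable g := by
    have h2 := hG.summable.mul_left ((N : ℂ)⁻¹)
    refine h2.congr fun m => ?_
    field_simp
  set T : ℂ := ∑' m, g m with hT
  have hTsum : HasSum g T := hgsummable.hasSum
  have hS_eq : ∑ k ∈ range N, W k * f (z k) = (N : ℂ) * T := ((hTsum.mul_left (N:ℂ)).unique hG).symm
  -- real part bounds
  have hWre : ∀ k, 0 ≤ (W k).re ∧ (W k).im = 0 := by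
    intro k
    have hconj : (starRingEnd ℂ) l * E (n:ℤ) k = (starRingEnd ℂ) (l * E (-(n:ℤ)) k) := by
      rw [map_mul, hEconj, neg_neg]
    have hWk : W k = 2 + ((2 * (l * E (-(n:ℤ)) k).re : ℝ) : ℂ) := by
      simp only [hW]
      rw [add_assoc, hconj, Complex.add_conj]
    have habsw : ‖l * E (-(n:ℤ)) k‖ = 1 := by
      rw [norm_mul, hl_abs, hEabs, one_mul]
    have hrew : -1 ≤ (l * E (-(n:ℤ)) k).re := by
      have h3 := Complex.abs_re_le_norm (l * E (-(n:ℤ)) k)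
      rw [habsw] at h3
      have := abs_le.mp h3
      linarith [this.1]
    constructor
    · have h9 : (W k).re = 2 + 2 * (l * E (-(n:ℤ)) k).re := by rw [hWk]; simp
      rw [h9]; linarith
    · rw [hWk]; simp
  have hfre : ∀ k, (f (z k)).re < 1 := fun k => hre _ (hz_mem k)
  have hterm : ∀ k, (W k * f (z k)).re ≤ (W k).re := by
    intro k
    have h4 : (W k * (1 - f (z k))).re = (W k).re * (1 - (f (z k)).re) := by
      rw [Complex.mul_re, (hWre k).2]
      simp
    have h5 : 0 ≤ (W k * (1 - f (z k))).re := by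
      rw [h4]
      exact mul_nonneg (hWre k).1 (by linarith [hfre k])
    have h6 : W k * (1 - f (z k)) = W k - W k * f (z k) := by ring
    rw [h6, Complex.sub_re] at h5
    linarith
  have hWsum : ∑ k ∈ range N, W k = 2 * N := by
    simp only [hW]
    rw [Finset.sum_add_distrib, Finset.sum_add_distrib,
      ← Finset.mul_sum, ← Finset.mul_sum, hEsum, hEsum]
    have hd1 : ¬ (N:ℤ) ∣ -(n:ℤ) := hndvd _ (by simpa using hn) (by simpa using hnN)
    have hd2 : ¬ (N:ℤ) ∣ (n:ℤ) := hndvd _ (by exact_mod_cast hn) (by simpa using hnN)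
    rw [if_neg hd1, if_neg hd2]
    simp [Finset.sum_const]
    ring
  have hTre : T.re ≤ 2 := by
    have h7 : ((N:ℂ) * T).re ≤ 2 * N := by
      rw [← hS_eq, Complex.re_sum]
      calc ∑ k ∈ range N, (W k * f (z k)).re ≤ ∑ k ∈ range N, (W k).re :=
            Finset.sum_le_sum fun k _ => hterm k
        _ = (∑ k ∈ range N, W k).re := (Complex.re_sum _ _).symm
        _ = 2 * N := by rw [hWsum]; simp
    have h8 : ((N:ℂ) * T).re = (N:ℝ) * T.re := by
      simp [Complex.mul_re]
    rw [h8] at h7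
    have hNR : (0:ℝ) < N := by exact_mod_cast hNpos
    nlinarith
  -- decomposition
  have hg0 : g 0 = 2 * (a₀ : ℂ) := by
    have hd1 : ¬ (N:ℤ) ∣ ((0:ℕ):ℤ) - n := by
      rw [show ((0:ℕ):ℤ) - n = -(n:ℤ) by simp]
      exact hndvd _ (by simpa using hn) (by simpa using hnN)
    have hd2 : ¬ (N:ℤ) ∣ ((0:ℕ):ℤ) + n := by
      rw [show ((0:ℕ):ℤ) + n = (n:ℤ) by simp]
      exact hndvd _ (by exact_mod_cast hn) (by simpa using hnN)
    simp only [hg, hD]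
    rw [if_pos (by simp : (N:ℤ) ∣ ((0:ℕ):ℤ)), if_neg hd1, if_neg hd2, ha₀]
    simp
  have hgn : g n = ((‖a n‖ * ρ ^ n : ℝ) : ℂ) := by
    have hd1 : ¬ (N:ℤ) ∣ (n:ℤ) := hndvd _ (by exact_mod_cast hn) (by simpa using hnN)
    have hd2 : (N:ℤ) ∣ ((n:ℤ) - n) := by simp
    have hd3 : ¬ (N:ℤ) ∣ ((n:ℤ) + n) := by
      rw [show (n:ℤ) + n = ((2*n : ℕ) : ℤ) by push_cast; ring]
      exact hndvd _ (by exact_mod_cast (by omega : 2*n ≠ 0)) (by simpa [Int.natAbs_mul] using h2nN)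
    simp only [hg, hD]
    rw [if_neg hd1, if_pos hd2, if_neg hd3]
    rw [zero_add, add_zero, ← mul_assoc, hl_an]
    push_cast
    ring
  -- decomposition of T
  have h0' : HasSum (fun m => if m = 0 then g 0 else 0) (g 0) := hasSum_ite_eq 0 (g 0)
  have hn' : HasSum (fun m => if m = n then g n else 0) (g n) := hasSum_ite_eq n (g n)
  set g' : ℕ → ℂ := fun m => if m = 0 ∨ m = n then 0 else g m with hg'def
  have hg' : HasSum g' (T - g 0 - g n) := by
    have h := (hTsum.sub h0').sub hn'
    have hfe : (fun m => g m - (if m = 0 then g 0 else 0) - (if m = n then g n else 0)) = g' := by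
      funext m
      by_cases hm0 : m = 0
      · subst hm0
        simp [hg'def, (Ne.symm hn)]
      · by_cases hmn : m = n
        · subst hmn
          simp [hg'def, hm0]
        · simp [hg'def, hm0, hmn]
    rwa [hfe] at h
  set hb : ℕ → ℝ := fun m => if m < K then 0 else 4 * (‖a m‖ * ρ ^ m) with hhb
  have hg'_le : ∀ m, ‖g' m‖ ≤ hb m := by
    intro m
    by_cases hmK : m < K
    · have hzero : g' m = 0 := by
        by_cases hm0 : m = 0
        · simp [hg'def, hm0]
        · by_cases hmn : m = n
          · simp [hg'def, hmn]
          · have hd1 : ¬ (N:ℤ) ∣ (m:ℤ) := hndvd _ (by exact_mod_cast hm0)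
              (by simpa using lt_of_lt_of_le hmK hKN)
            have hd2 : ¬ (N:ℤ) ∣ ((m:ℤ) - n) := by
              apply hndvd
              · intro h
                exact hmn (by exact_mod_cast sub_eq_zero.mp h)
              · omega
            have hd3 : ¬ (N:ℤ) ∣ ((m:ℤ) + n) := by
              apply hndvd
              · omega
              · omega
            simp [hg'def, hm0, hmn, hg, hD, hd1, hd2, hd3]
      rw [hzero]
      simp [hhb, hmK]
    · have hm0 : m ≠ 0 := by omega
      have hmn : m ≠ n := by omega
      have hg'm : g' m = g m := by simp [hg'def, hm0, hmn]
      rw [hg'm]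
      have hDm : ‖D m‖ ≤ 4 := by
        have t1 : ‖if (N:ℤ) ∣ (m:ℤ) then (2:ℂ) else 0‖ ≤ 2 := by
          split_ifs <;> simp
        have t2 : ‖if (N:ℤ) ∣ ((m:ℤ) - n) then l else 0‖ ≤ 1 := by
          split_ifs <;> simp [hl_abs]
        have t3 : ‖if (N:ℤ) ∣ ((m:ℤ) + n) then (starRingEnd ℂ) l else 0‖ ≤ 1 := by
          split_ifs <;> simp [hlconj_abs, hl_abs]
        have tr1 := norm_add_le
          ((if (N:ℤ) ∣ (m:ℤ) then (2:ℂ) else 0) + (if (N:ℤ) ∣ ((m:ℤ) - n) then l else 0))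
          (if (N:ℤ) ∣ ((m:ℤ) + n) then (starRingEnd ℂ) l else 0)
        have tr2 := norm_add_le (if (N:ℤ) ∣ (m:ℤ) then (2:ℂ) else 0)
          (if (N:ℤ) ∣ ((m:ℤ) - n) then l else 0)
        simp only [hD]
        linarith
      have hnorm_gm : ‖g m‖ = ‖D m‖ * (‖a m‖ * ρ ^ m) := by
        simp [hg, norm_mul, norm_pow, Complex.norm_real, Real.norm_eq_abs,
          _root_.abs_of_pos hρ0]
      rw [hnorm_gm]
      have : ‖D m‖ * (‖a m‖ * ρ ^ m)
          ≤ 4 * (‖a m‖ * ρ ^ m) :=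
        mul_le_mul_of_nonneg_right hDm (by positivity)
      simpa [hhb, hmK] using this
  have hbnonneg : ∀ m, 0 ≤ hb m := by
    intro m
    simp only [hhb]
    split_ifs
    · exact le_rfl
    · positivity
  have hb_summable : Summable hb := by
    refine Summable.of_nonneg_of_le hbnonneg (fun m => ?_) (hS.mul_left 4)
    simp only [hhb]
    split_ifs
    · positivity
    · exact le_rfl
  have hg'norm : Summable (fun m => ‖g' m‖) :=
    Summable.of_nonneg_of_le (fun m => norm_nonneg _) hg'_le hb_summable
  have hXnorm : ‖T - g 0 - g n‖ ≤ ∑' m, hb m := by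
    calc ‖T - g 0 - g n‖ = ‖∑' m, g' m‖ := by rw [hg'.tsum_eq]
      _ ≤ ∑' m, ‖g' m‖ := norm_tsum_le_tsum_norm hg'norm
      _ ≤ ∑' m, hb m := Summable.tsum_le_tsum hg'_le hg'norm hb_summable
  have hbsum : ∑' m, hb m = 4 * ∑' m, ‖a (m + K)‖ * ρ ^ (m + K) := by
    rw [← Summable.sum_add_tsum_nat_add K hb_summable]
    have z1 : ∑ i ∈ range K, hb i = 0 :=
      Finset.sum_eq_zero fun i hi => by simp [hhb, Finset.mem_range.mp hi]
    have z2 : ∀ i : ℕ, hb (i + K) = 4 * (‖a (i + K)‖ * ρ ^ (i + K)) := by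
      intro i
      simp only [hhb]
      rw [if_neg (by omega)]
    rw [z1, zero_add, tsum_congr z2, tsum_mul_left]
  have htail4 : ∑' m : ℕ, ‖a (m + K)‖ * ρ ^ (m + K) < ε / 4 :=
    hK₀ K (le_max_right _ _)
  have hXre : -ε ≤ (T - g 0 - g n).re := by
    have h10 := Complex.abs_re_le_norm (T - g 0 - g n)
    have h11 : ‖T - g 0 - g n‖ ≤ ε := by
      rw [hbsum] at hXnorm
      linarith
    have := abs_le.mp (le_trans h10 h11)
    linarith [this.1]
  have hTre_decomp : T.re = 2 * a₀ + ‖a n‖ * ρ ^ n + (T - g 0 - g n).re := by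
    have r0 : (g 0).re = 2 * a₀ := by rw [hg0]; simp
    have rn : (g n).re = ‖a n‖ * ρ ^ n := by rw [hgn, Complex.ofReal_re]
    have e2 : (T - g 0 - g n).re = T.re - (g 0).re - (g n).re := by
      simp [Complex.sub_re]
    rw [e2, r0, rn]
    ring
  linarith [hTre, hXre, hTre_decomp]

/-- **Theorem 1, first part.** If `f(z) = Σ aₙ zⁿ` is analytic in the unit disk with
`a₀ ∈ (0,1)` real and `Re f(z) < 1` there, then
`Σ |aₙ| rⁿ + (1/(1+a₀) + r/(1−r)) Σ_{n≥1} |aₙ|² r^{2n} ≤ 1` for all `0 ≤ r ≤ r_*`,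
where `r_* ≈ 0.24683` is the unique root of `3r³ − 5r² − 3r + 1 = 0` in `(0,1)`. -/
theorem refined_bohr_re_lt_one
    (f : ℂ → ℂ) (a : ℕ → ℂ) (a₀ : ℝ)
    (hf : ∀ z ∈ ball (0 : ℂ) 1, HasSum (fun n : ℕ => a n * z ^ n) (f z))
    (hre : ∀ z ∈ ball (0 : ℂ) 1, (f z).re < 1)
    (ha₀ : a 0 = (a₀ : ℂ)) (h0 : 0 < a₀) (h1 : a₀ < 1)
    (rs : ℝ) (hrs : rs ∈ Set.Ioo (0 : ℝ) 1)
    (hroot : 3 * rs ^ 3 - 5 * rs ^ 2 - 3 * rs + 1 = 0)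
    (r : ℝ) (hr0 : 0 ≤ r) (hr : r ≤ rs) :
    (∑' n : ℕ, ‖a n‖ * r ^ n) +
      (1 / (1 + a₀) + r / (1 - r)) *
        ∑' n : ℕ, ‖a (n + 1)‖ ^ 2 * r ^ (2 * (n + 1)) ≤ 1 := by
  obtain ⟨hrs0, hrs1⟩ := hrs
  have hr1 : r < 1 := lt_of_le_of_lt hr hrs1
  have h1r : (0:ℝ) < 1 - r := by linarith
  have h1r2 : (0:ℝ) < 1 - r^2 := by nlinarith
  have h1a : (0:ℝ) < 1 + a₀ := by linarith
  have habs0 : ‖a 0‖ = a₀ := by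
    rw [ha₀, Complex.norm_real, Real.norm_eq_abs, abs_of_pos h0]
  have hcoef : ∀ n : ℕ, ‖a (n + 1)‖ ≤ 2 * (1 - a₀) :=
    fun n => coeff_abs_le hf hre ha₀ h1 (n + 1) (by omega)
  have h2a : (0:ℝ) ≤ 2 * (1 - a₀) := by linarith
  -- first sum
  have hS1 : Summable (fun n : ℕ => ‖a n‖ * r ^ n) :=
    summable_abs_coeff hf hr0 hr1
  have hS1' : Summable (fun n : ℕ => ‖a (n + 1)‖ * r ^ (n + 1)) :=
    (summable_nat_add_iff 1).mpr hS1
  have hgeom1 : Summable (fun n : ℕ => 2 * (1 - a₀) * r ^ (n + 1)) := by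
    refine Summable.mul_left _ ?_
    exact (summable_nat_add_iff 1).mpr (summable_geometric_of_lt_one hr0 hr1)
  have hgeom1sum : ∑' n : ℕ, 2 * (1 - a₀) * r ^ (n + 1) = 2 * (1 - a₀) * (r / (1 - r)) := by
    rw [tsum_mul_left]
    congr 1
    have : ∀ n : ℕ, r ^ (n + 1) = r * r ^ n := fun n => by ring
    rw [tsum_congr this, tsum_mul_left, tsum_geometric_of_lt_one hr0 hr1]
    rw [div_eq_mul_inv]
  have hA : (∑' n : ℕ, ‖a n‖ * r ^ n)
      ≤ a₀ + 2 * (1 - a₀) * (r / (1 - r)) := by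
    rw [Summable.tsum_eq_zero_add hS1]
    simp only [pow_zero, mul_one, habs0]
    have : (∑' n : ℕ, ‖a (n + 1)‖ * r ^ (n + 1))
        ≤ ∑' n : ℕ, 2 * (1 - a₀) * r ^ (n + 1) := by
      refine Summable.tsum_le_tsum (fun n => ?_) hS1' hgeom1
      exact mul_le_mul_of_nonneg_right (hcoef n) (by positivity)
    rw [hgeom1sum] at this
    linarith
  -- second sum
  have hterm2 : ∀ n : ℕ, ‖a (n + 1)‖ ^ 2 * r ^ (2 * (n + 1))
      ≤ 4 * (1 - a₀)^2 * (r^2) ^ (n + 1) := by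
    intro n
    have h2 : ‖a (n + 1)‖ ^ 2 ≤ (2 * (1 - a₀))^2 := by
      have := hcoef n
      nlinarith [norm_nonneg (a (n + 1))]
    have h3 : r ^ (2 * (n + 1)) = (r^2) ^ (n + 1) := by rw [← pow_mul]
    rw [h3]
    have h4 : (0:ℝ) ≤ (r^2) ^ (n+1) := by positivity
    nlinarith [h2, h4]
  have hgeom2 : Summable (fun n : ℕ => 4 * (1 - a₀)^2 * (r^2) ^ (n + 1)) := by
    refine Summable.mul_left _ ?_
    refine (summable_nat_add_iff 1).mpr (summable_geometric_of_lt_one (by positivity) ?_)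
    nlinarith
  have hS2 : Summable (fun n : ℕ => ‖a (n + 1)‖ ^ 2 * r ^ (2 * (n + 1))) := by
    refine Summable.of_nonneg_of_le (fun n => by positivity) hterm2 hgeom2
  have hgeom2sum : ∑' n : ℕ, 4 * (1 - a₀)^2 * (r^2) ^ (n + 1)
      = 4 * (1 - a₀)^2 * (r^2 / (1 - r^2)) := by
    rw [tsum_mul_left]
    congr 1
    have : ∀ n : ℕ, (r^2) ^ (n + 1) = r^2 * (r^2) ^ n := fun n => by ring
    rw [tsum_congr this, tsum_mul_left,
      tsum_geometric_of_lt_one (by positivity) (by nlinarith)]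
    rw [div_eq_mul_inv]
  have hB : (∑' n : ℕ, ‖a (n + 1)‖ ^ 2 * r ^ (2 * (n + 1)))
      ≤ 4 * (1 - a₀)^2 * (r^2 / (1 - r^2)) := by
    rw [← hgeom2sum]
    exact Summable.tsum_le_tsum hterm2 hS2 hgeom2
  have hc : (0:ℝ) ≤ 1 / (1 + a₀) + r / (1 - r) := by positivity
  -- polynomial part
  have hrs13 : rs ≤ 1/3 := by nlinarith [sq_nonneg rs, mul_pos hrs0 hrs0]
  have hp : 0 ≤ 3 * r ^ 3 - 5 * r ^ 2 - 3 * r + 1 := by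
    nlinarith [mul_nonneg (sub_nonneg.mpr hr) (sub_nonneg.mpr hr),
      mul_nonneg hr0 (sub_nonneg.mpr hr), sq_nonneg (rs - r), sq_nonneg rs, hroot,
      mul_nonneg (mul_nonneg hr0 hr0) (sub_nonneg.mpr hr)]
  have hfinal : a₀ + 2 * (1 - a₀) * (r / (1 - r))
      + (1 / (1 + a₀) + r / (1 - r)) * (4 * (1 - a₀)^2 * (r^2 / (1 - r^2))) ≤ 1 := by
    rw [← sub_nonneg]
    have heq : 1 - (a₀ + 2 * (1 - a₀) * (r / (1 - r))
        + (1 / (1 + a₀) + r / (1 - r)) * (4 * (1 - a₀)^2 * (r^2 / (1 - r^2))))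
        = ((1 - a₀) * ((3 * r ^ 3 - 5 * r ^ 2 - 3 * r + 1)
            + a₀ * (1 - r)^3 + 4 * a₀^2 * r^3)) / ((1 - r)^2 * (1 + r) * (1 + a₀)) := by
      have e1 : 1 - r^2 = (1 - r) * (1 + r) := by ring
      rw [e1]
      field_simp
      ring
    rw [heq]
    apply div_nonneg _ (by positivity)
    have ht1 : (0:ℝ) ≤ 1 - a₀ := by linarith
    have ht2 : (0:ℝ) ≤ a₀ * (1 - r)^3 := by positivity
    have ht3 : (0:ℝ) ≤ 4 * a₀^2 * r^3 := by positivity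
    nlinarith [hp, ht1, ht2, ht3]
  have hmul : (1 / (1 + a₀) + r / (1 - r)) *
        (∑' n : ℕ, ‖a (n + 1)‖ ^ 2 * r ^ (2 * (n + 1)))
      ≤ (1 / (1 + a₀) + r / (1 - r)) * (4 * (1 - a₀)^2 * (r^2 / (1 - r^2))) :=
    mul_le_mul_of_nonneg_left hB hc
  linarith [hA, hmul, hfinal]
end

section
/- Let g be analytic and univalent in the unit disk D with g(D) a convex domain, let f(z) = Σ_{n=0}^∞ a_n z^n be analytic in D with f subordinate to g, and let λ = dist(g(0), ∂g(D)) ≤ 1. Then Σ_{n=1}^∞ |a_n| r^n + (1/(2−λ) + r/(1−r)) · Σ_{n=1}^∞ |a_n|² r^{2n} ≤ λ holds for all r with 0 ≤ r ≤ r_*, where r_* ≈ 0.24683 is the unique root in (0,1) of 3r³ − 5r² − 3r + 1 = 0. -/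
open Metric Real Complex intervalIntegral


lemma aux_integral_exp (m : ℤ) :
    (∫ t in (0:ℝ)..(2*π), Complex.exp (m * t * Complex.I)) =
      if m = 0 then (2*π : ℂ) else 0 := by
  rcases eq_or_ne m 0 with rfl | hm
  · simp
  · rw [if_neg hm]
    have hc : (m : ℂ) * Complex.I ≠ 0 := by
      simp [Complex.I_ne_zero, hm]
    have : ∀ t : ℝ, (m : ℂ) * t * Complex.I = ((m : ℂ) * Complex.I) * t := by
      intro t; ring
    simp_rw [this]
    rw [integral_exp_mul_complex hc]
    have h1 : Complex.exp ((m : ℂ) * Complex.I * (2*π:ℝ)) = 1 := by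
      rw [show (m : ℂ) * Complex.I * (2*π:ℝ) = (m : ℤ) * (2 * π * Complex.I) by push_cast; ring]
      exact Complex.exp_int_mul_two_pi_mul_I m
    rw [h1]
    simp

lemma aux_fourier (c : ℕ → ℂ) (ρ : ℝ) (hρ0 : 0 ≤ ρ)
    (hsum : Summable fun k => ‖c k‖ * ρ ^ k) (m : ℤ) :
    (∫ t in (0:ℝ)..(2*π),
        (∑' k : ℕ, c k * (ρ * Complex.exp (t * Complex.I)) ^ k) *
          Complex.exp (-(m:ℂ) * t * Complex.I)) =
      if 0 ≤ m then (2*π : ℂ) * c m.toNat * ρ ^ m.toNat else 0 := by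
  -- the k-th term as a function of t
  set F : ℕ → ℝ → ℂ := fun k t =>
    c k * (↑ρ * Complex.exp (↑t * Complex.I)) ^ k * Complex.exp (-(m:ℂ) * ↑t * Complex.I) with hF
  have hFeq : ∀ k (t : ℝ), F k t = c k * ρ ^ k * Complex.exp (((k : ℤ) - m : ℤ) * t * Complex.I) := by
    intro k t
    rw [hF]
    simp only
    rw [mul_pow, ← Complex.exp_nat_mul, mul_assoc, mul_assoc, ← Complex.exp_add]
    push_cast
    ring_nf
  have hnorm : ∀ k (t : ℝ), ‖F k t‖ = ‖c k‖ * ρ ^ k := by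
    intro k t
    rw [hFeq]
    have : ((((k : ℤ) - m : ℤ)) : ℂ) * t * Complex.I = (((((k:ℤ) - m : ℤ)) : ℝ) * t : ℝ) * Complex.I := by
      push_cast; ring
    rw [this, norm_mul, norm_mul, norm_pow]
    simp only [Complex.norm_exp_ofReal_mul_I, mul_one, Complex.norm_real, Real.norm_eq_abs]
    rw [_root_.abs_of_nonneg hρ0]
  have hcont : ∀ k, Continuous (F k) := by
    intro k
    apply Continuous.mul
    · exact continuous_const.mul ((continuous_const.mul
        ((Complex.continuous_ofReal.mul continuous_const).cexp)).pow k)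
    · exact ((continuous_const.mul Complex.continuous_ofReal).mul continuous_const).cexp
  have hHasSum : HasSum (fun k => ∫ t in (0:ℝ)..(2*π), F k t)
      (∫ t in (0:ℝ)..(2*π),
        (∑' k : ℕ, c k * (↑ρ * Complex.exp (↑t * Complex.I)) ^ k) *
          Complex.exp (-(m:ℂ) * ↑t * Complex.I)) := by
    apply intervalIntegral.hasSum_integral_of_dominated_convergence
      (fun k (t : ℝ) => ‖c k‖ * ρ ^ k)
    · exact fun k => (hcont k).aestronglyMeasurable
    · exact fun k => Filter.Eventually.of_forall fun t _ => le_of_eq (hnorm k t)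
    · exact Filter.Eventually.of_forall fun t _ => hsum
    · exact intervalIntegrable_const
    · refine Filter.Eventually.of_forall fun t _ => ?_
      apply HasSum.mul_right
      refine (Summable.hasSum ?_)
      apply Summable.of_norm
      refine hsum.congr fun k => ?_
      rw [norm_mul, norm_pow, norm_mul]
      simp only [Complex.norm_exp_ofReal_mul_I, Complex.norm_real, Real.norm_eq_abs, mul_one]
      rw [_root_.abs_of_nonneg hρ0]
  -- compute each integral
  have hint : ∀ k : ℕ, (∫ t in (0:ℝ)..(2*π), F k t) =
      if (k : ℤ) = m then (2*π : ℂ) * c k * ρ ^ k else 0 := by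
    intro k
    simp_rw [hFeq k]
    rw [intervalIntegral.integral_const_mul, aux_integral_exp]
    rcases eq_or_ne ((k : ℤ)) m with h | h
    · rw [if_pos (by omega : ((k:ℤ) - m) = 0), if_pos h]; ring
    · rw [if_neg (by omega : ¬ ((k:ℤ) - m) = 0), if_neg h, mul_zero]
  rcases le_or_gt 0 m with hm | hm
  · rw [if_pos hm]
    have h2 : HasSum (fun k : ℕ => if k = m.toNat then (2*π:ℂ) * c m.toNat * ρ ^ m.toNat else 0)
        ((2*π:ℂ) * c m.toNat * ρ ^ m.toNat) := hasSum_ite_eq m.toNat _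
    have h3 : (fun k : ℕ => ∫ t in (0:ℝ)..(2*π), F k t) =
        fun k : ℕ => if k = m.toNat then (2*π:ℂ) * c m.toNat * ρ ^ m.toNat else 0 := by
      funext k
      rw [hint k]
      by_cases h : k = m.toNat
      · subst h; rw [if_pos (by omega), if_pos rfl]
      · rw [if_neg (by omega), if_neg h]
    rw [h3] at hHasSum
    exact hHasSum.unique h2
  · rw [if_neg (not_le.mpr hm)]
    have h3 : (fun k : ℕ => ∫ t in (0:ℝ)..(2*π), F k t) = fun _ : ℕ => (0:ℂ) := by
      funext k
      rw [hint k, if_neg (by omega)]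
    rw [h3] at hHasSum
    exact hHasSum.unique hasSum_zero

/-- Summability of the coefficients against any radius `< 1`, given convergence on the ball. -/
lemma aux_summable (c : ℕ → ℂ) (F : ℂ → ℂ)
    (hFs : ∀ z ∈ ball (0:ℂ) 1, HasSum (fun k => c k * z ^ k) (F z))
    (ρ : ℝ) (hρ0 : 0 ≤ ρ) (hρ1 : ρ < 1) :
    Summable fun k => ‖c k‖ * ρ ^ k := by
  set σ : ℝ := (ρ + 1) / 2 with hσ
  have hσ0 : 0 < σ := by positivity
  have hρσ : ρ < σ := by rw [hσ]; linarith
  have hσ1 : σ < 1 := by rw [hσ]; linarith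
  have hmem : (σ : ℂ) ∈ ball (0:ℂ) 1 := by
    simp only [mem_ball, dist_zero_right, Complex.norm_real, Real.norm_eq_abs]
    rw [_root_.abs_of_nonneg hσ0.le]; exact hσ1
  have hsummable : Summable fun k => c k * (σ:ℂ) ^ k := (hFs _ hmem).summable
  have htend : Filter.Tendsto (fun k => ‖c k * (σ:ℂ) ^ k‖) Filter.atTop (nhds 0) :=
    (hsummable.tendsto_atTop_zero).norm.congr' (by simp) |>.mono_right (by simp [norm_zero]) |>.mono_left le_rfl
  obtain ⟨M, hM⟩ := htend.bddAbove_range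
  have hMle : ∀ k, ‖c k‖ * σ ^ k ≤ M := by
    intro k
    have := hM ⟨k, rfl⟩
    simpa [norm_mul, norm_pow, Complex.norm_real, Real.norm_eq_abs,
      _root_.abs_of_nonneg hσ0.le] using this
  have hgeo : Summable fun k : ℕ => M * (ρ / σ) ^ k :=
    (summable_geometric_of_lt_one (by positivity) (by rw [div_lt_one hσ0]; exact hρσ)).mul_left M
  refine Summable.of_nonneg_of_le (fun k => by positivity) (fun k => ?_) hgeo
  have key : ‖c k‖ * ρ ^ k = (‖c k‖ * σ ^ k) * (ρ / σ) ^ k := by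
    rw [mul_assoc, ← mul_pow, mul_div_cancel₀ _ (ne_of_gt hσ0)]
  rw [key]
  exact mul_le_mul_of_nonneg_right (hMle k) (by positivity)

/-- Carathéodory-type coefficient bound. -/
lemma aux_carath (c : ℕ → ℂ) (F : ℂ → ℂ) (lam' : ℝ)
    (hFs : ∀ z ∈ ball (0:ℂ) 1, HasSum (fun k => c k * z ^ k) (F z))
    (h0 : c 0 = 0)
    (hre : ∀ z ∈ ball (0:ℂ) 1, (F z).re ≤ lam')
    (n : ℕ) (hn : 1 ≤ n) : ‖c n‖ ≤ 2 * lam' := by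
  have key : ∀ ρ : ℝ, 0 < ρ → ρ < 1 → ‖c n‖ * ρ ^ n ≤ 2 * lam' := by
    intro ρ hρ0 hρ1
    have hsum := aux_summable c F hFs ρ hρ0.le hρ1
    set G : ℝ → ℂ := fun t => ∑' k : ℕ, c k * (ρ * Complex.exp (t * Complex.I)) ^ k with hG
    have hzmem : ∀ t : ℝ, (ρ : ℂ) * Complex.exp (t * Complex.I) ∈ ball (0:ℂ) 1 := by
      intro t
      simp only [mem_ball, dist_zero_right, norm_mul, Complex.norm_real, Real.norm_eq_abs,
        Complex.norm_exp_ofReal_mul_I, mul_one]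
      rw [_root_.abs_of_nonneg hρ0.le]; exact hρ1
    have hGF : ∀ t : ℝ, G t = F ((ρ : ℂ) * Complex.exp (t * Complex.I)) := fun t =>
      (hFs _ (hzmem t)).tsum_eq
    have hGre : ∀ t : ℝ, (G t).re ≤ lam' := fun t => by rw [hGF]; exact hre _ (hzmem t)
    -- continuity of G
    have hGcont : Continuous G := by
      apply continuous_tsum (u := fun k => ‖c k‖ * ρ ^ k) _ hsum
      · intro k t
        rw [norm_mul, norm_pow, norm_mul]
        simp only [Complex.norm_exp_ofReal_mul_I, Complex.norm_real, Real.norm_eq_abs, mul_one]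
        rw [_root_.abs_of_nonneg hρ0.le]
      · intro k
        exact continuous_const.mul ((continuous_const.mul
          ((Complex.continuous_ofReal.mul continuous_const).cexp)).pow k)
    -- the basic integrals
    have hA : (∫ t in (0:ℝ)..(2*π), G t * Complex.exp (-(n:ℂ) * t * Complex.I)) =
        (2*π : ℂ) * c n * ρ ^ n := by
      have := aux_fourier c ρ hρ0.le hsum (n : ℤ)
      rw [if_pos (Int.ofNat_nonneg n)] at this
      simpa using this
    have hB : (∫ t in (0:ℝ)..(2*π), G t * Complex.exp ((n:ℂ) * t * Complex.I)) = 0 := by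
      have := aux_fourier c ρ hρ0.le hsum (-(n : ℤ))
      rw [if_neg (by omega)] at this
      simpa using this
    have hE : (∫ t in (0:ℝ)..(2*π), G t) = 0 := by
      have := aux_fourier c ρ hρ0.le hsum 0
      rw [if_pos le_rfl] at this
      simpa [h0] using this
    -- conjugate integral
    have hC : (∫ t in (0:ℝ)..(2*π), (starRingEnd ℂ) (G t) * Complex.exp (-(n:ℂ) * t * Complex.I)) = 0 := by
      have conj_eq : ∀ t : ℝ, (starRingEnd ℂ) (G t) * Complex.exp (-(n:ℂ) * t * Complex.I) =
          (starRingEnd ℂ) (G t * Complex.exp ((n:ℂ) * t * Complex.I)) := by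
        intro t
        rw [map_mul, ← Complex.exp_conj]
        congr 2
        simp [Complex.conj_I]
      simp_rw [conj_eq]
      rw [intervalIntegral.integral_of_le (by positivity : (0:ℝ) ≤ 2*π)]
      rw [integral_conj]
      rw [← intervalIntegral.integral_of_le (by positivity : (0:ℝ) ≤ 2*π), hB]
      simp
    -- constant integral
    have hD : (∫ t in (0:ℝ)..(2*π), (2*lam' : ℂ) * Complex.exp (-(n:ℂ) * t * Complex.I)) = 0 := by
      rw [intervalIntegral.integral_const_mul]
      have := aux_integral_exp (-(n:ℤ))
      rw [if_neg (by omega)] at this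
      have heq : (fun t : ℝ => Complex.exp (-(n:ℂ) * t * Complex.I)) =
          fun t : ℝ => Complex.exp ((((-(n:ℤ)) : ℤ) : ℂ) * t * Complex.I) := by
        push_cast; rfl
      rw [heq, this, mul_zero]
    -- integrability of all pieces
    have hcexp : Continuous fun t : ℝ => Complex.exp (-(n:ℂ) * t * Complex.I) :=
      ((continuous_const.mul Complex.continuous_ofReal).mul continuous_const).cexp
    have hint1 : IntervalIntegrable (fun t => G t * Complex.exp (-(n:ℂ) * t * Complex.I))
        MeasureTheory.volume 0 (2*π) := ((hGcont.mul hcexp)).intervalIntegrable _ _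
    have hint2 : IntervalIntegrable (fun t => (starRingEnd ℂ) (G t) * Complex.exp (-(n:ℂ) * t * Complex.I))
        MeasureTheory.volume 0 (2*π) :=
      ((Complex.continuous_conj.comp hGcont).mul hcexp).intervalIntegrable _ _
    have hint3 : IntervalIntegrable (fun t => (2*lam' : ℂ) * Complex.exp (-(n:ℂ) * t * Complex.I))
        MeasureTheory.volume 0 (2*π) := (continuous_const.mul hcexp).intervalIntegrable _ _
    -- the combination
    have hcomb : (∫ t in (0:ℝ)..(2*π),
        (G t + (starRingEnd ℂ) (G t) - (2*lam' : ℂ)) * Complex.exp (-(n:ℂ) * t * Complex.I)) =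
        (2*π : ℂ) * c n * ρ ^ n := by
      have : (fun t : ℝ => (G t + (starRingEnd ℂ) (G t) - (2*lam' : ℂ)) *
          Complex.exp (-(n:ℂ) * t * Complex.I)) =
          fun t : ℝ => G t * Complex.exp (-(n:ℂ) * t * Complex.I) +
            (starRingEnd ℂ) (G t) * Complex.exp (-(n:ℂ) * t * Complex.I) -
            (2*lam' : ℂ) * Complex.exp (-(n:ℂ) * t * Complex.I) := by
        funext t; ring
      rw [this, intervalIntegral.integral_sub (hint1.add hint2) hint3,
        intervalIntegral.integral_add hint1 hint2, hA, hC, hD]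
      ring
    have hptwise : ∀ t : ℝ, ‖(G t + (starRingEnd ℂ) (G t) - (2*lam' : ℂ)) *
        Complex.exp (-(n:ℂ) * t * Complex.I)‖ = 2*lam' - 2*(G t).re := by
      intro t
      have heq : G t + (starRingEnd ℂ) (G t) - (2*lam' : ℂ) = ((2*(G t).re - 2*lam' : ℝ) : ℂ) := by
        rw [Complex.add_conj]
        push_cast
        ring
      rw [norm_mul, heq]
      have h1 : ‖Complex.exp (-(n:ℂ) * t * Complex.I)‖ = 1 := by
        have h2 : (-(n:ℂ)) * t * Complex.I = ((-(n:ℝ) * t : ℝ) : ℂ) * Complex.I := by push_cast; ring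
        rw [h2, Complex.norm_exp_ofReal_mul_I]
      rw [h1, mul_one, Complex.norm_real, Real.norm_eq_abs, abs_sub_comm]
      rw [_root_.abs_of_nonneg (by have := hGre t; linarith)]
    have hGint : MeasureTheory.IntegrableOn G (Set.Ioc (0:ℝ) (2*π)) MeasureTheory.volume :=
      hGcont.integrableOn_Ioc
    have hReint : (∫ t in (0:ℝ)..(2*π), (G t).re) = 0 := by
      rw [intervalIntegral.integral_of_le (by positivity : (0:ℝ) ≤ 2*π)]
      simp only [show ∀ z:ℂ, z.re = RCLike.re z from fun _ => rfl]
      rw [integral_re hGint]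
      rw [← intervalIntegral.integral_of_le (by positivity : (0:ℝ) ≤ 2*π), hE]
      simp
    have hnormle : ‖(2*π : ℂ) * c n * (ρ:ℂ) ^ n‖ ≤ 4*π*lam' := by
      rw [← hcomb]
      refine le_trans (intervalIntegral.norm_integral_le_integral_norm
        (by positivity : (0:ℝ) ≤ 2*π)) ?_
      rw [intervalIntegral.integral_congr (fun t _ => hptwise t)]
      have hsplit : (∫ t in (0:ℝ)..(2*π), (2*lam' - 2*(G t).re)) =
          (∫ t in (0:ℝ)..(2*π), (2*lam' : ℝ)) - 2 * (∫ t in (0:ℝ)..(2*π), (G t).re) := by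
        rw [← intervalIntegral.integral_const_mul,
          ← intervalIntegral.integral_sub intervalIntegrable_const]
        exact (Continuous.intervalIntegrable (by exact (continuous_const.mul
          (Complex.continuous_re.comp hGcont))) _ _)
      rw [hsplit, hReint]
      simp only [intervalIntegral.integral_const, smul_eq_mul, sub_zero, mul_zero]
      ring_nf
      nlinarith [Real.pi_pos]
    have hfin : 2*π * (‖c n‖ * ρ ^ n) ≤ 4*π*lam' := by
      refine le_trans (le_of_eq ?_) hnormle
      rw [norm_mul, norm_mul, norm_pow]
      simp only [Complex.norm_real, Real.norm_eq_abs, norm_mul, Complex.norm_two,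
        Complex.norm_ofNat]
      rw [_root_.abs_of_nonneg hρ0.le, _root_.abs_of_nonneg Real.pi_pos.le]
      ring_nf
    nlinarith [Real.pi_pos]
  -- limit ρ → 1⁻
  have hlim : Filter.Tendsto (fun ρ : ℝ => ‖c n‖ * ρ ^ n)
      (nhdsWithin 1 (Set.Iio 1)) (nhds (‖c n‖)) := by
    have hcnt : Continuous fun ρ : ℝ => ‖c n‖ * ρ ^ n := by continuity
    simpa using (hcnt.tendsto 1).mono_left nhdsWithin_le_nhds
  refine le_of_tendsto hlim ?_
  filter_upwards [Ioo_mem_nhdsLT_of_mem (show (1:ℝ) ∈ Set.Ioc 0 1 by norm_num)] with ρ hρ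
  exact key ρ hρ.1 hρ.2

-- `g` analytic injective on unit ball: image of open subsets is open
lemma aux_isOpenMap (g : ℂ → ℂ) (hg : DifferentiableOn ℂ g (ball (0:ℂ) 1))
    (hginj : Set.InjOn g (ball (0:ℂ) 1)) :
    ∀ s ⊆ ball (0:ℂ) 1, IsOpen s → IsOpen (g '' s) := by
  have han : AnalyticOnNhd ℂ g (ball (0:ℂ) 1) := hg.analyticOnNhd isOpen_ball
  rcases han.is_constant_or_isOpen (convex_ball _ _).isPreconnected with ⟨w, hw⟩ | h
  · exfalso
    have h0 : (0:ℂ) ∈ ball (0:ℂ) 1 := by simp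
    have h2 : (1/2 : ℂ) ∈ ball (0:ℂ) 1 := by
      simp only [mem_ball, dist_zero_right]
      norm_num
    have := hginj h0 h2 (by rw [hw 0 h0, hw _ h2])
    norm_num at this
  · exact h

-- there is no surjection
lemma aux_not_surj (g : ℂ → ℂ) (hg : DifferentiableOn ℂ g (ball (0:ℂ) 1))
    (hginj : Set.InjOn g (ball (0:ℂ) 1)) :
    g '' ball (0:ℂ) 1 ≠ Set.univ := by
  intro hsurj
  have h0 : (0:ℂ) ∈ ball (0:ℂ) 1 := by simp
  have h2 : (1/2 : ℂ) ∈ ball (0:ℂ) 1 := by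
    simp only [mem_ball, dist_zero_right]; norm_num
  have hex : ∀ w : ℂ, ∃ z, z ∈ ball (0:ℂ) 1 ∧ g z = w := by
    intro w
    have : w ∈ g '' ball (0:ℂ) 1 := hsurj ▸ Set.mem_univ w
    obtain ⟨z, hz, hgz⟩ := this
    exact ⟨z, hz, hgz⟩
  choose h hball hgh using hex
  have hleft : ∀ z ∈ ball (0:ℂ) 1, h (g z) = z := fun z hz =>
    hginj (hball (g z)) hz (hgh (g z))
  have hopen := aux_isOpenMap g hg hginj
  -- h is continuous
  have hcont : Continuous h := by
    rw [continuous_iff_continuousAt]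
    intro w
    rw [ContinuousAt, Filter.tendsto_def]
    intro V hV
    obtain ⟨V', hV'sub, hV'open, hV'mem⟩ := _root_.mem_nhds_iff.mp hV
    have hV2 : IsOpen (V' ∩ ball (0:ℂ) 1) := hV'open.inter isOpen_ball
    have himg : IsOpen (g '' (V' ∩ ball (0:ℂ) 1)) :=
      hopen _ Set.inter_subset_right hV2
    apply _root_.mem_nhds_iff.mpr
    refine ⟨g '' (V' ∩ ball (0:ℂ) 1), ?_, himg, ?_⟩
    · rintro y ⟨z, ⟨hzV, hzball⟩, rfl⟩
      have : h (g z) = z := hleft z hzball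
      simp only [Set.mem_preimage, this]
      exact hV'sub hzV
    · exact ⟨h w, ⟨hV'mem, hball w⟩, hgh w⟩
  -- g is not locally constant anywhere: its image of ball is open... simpler: derivative analytic
  have hgan : AnalyticOnNhd ℂ g (ball (0:ℂ) 1) := hg.analyticOnNhd isOpen_ball
  have hgderiv : AnalyticOnNhd ℂ (deriv g) (ball (0:ℂ) 1) := hgan.deriv
  -- deriv g is not identically zero
  have hdnz : ¬ (∀ z ∈ ball (0:ℂ) 1, deriv g z = 0) := by
    intro hall
    have hconst : ∀ z ∈ ball (0:ℂ) 1, g z = g 0 := by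
      have : ∀ z ∈ ball (0:ℂ) 1, fderivWithin ℂ g (ball (0:ℂ) 1) z = 0 := by
        intro z hz
        have hd : DifferentiableAt ℂ g z :=
          (hg z hz).differentiableAt (isOpen_ball.mem_nhds hz)
        have : HasDerivAt g 0 z := by
          have := hd.hasDerivAt
          rwa [hall z hz] at this
        have h2 : HasFDerivAt g (0 : ℂ →L[ℂ] ℂ) z := by
          have h3 := this.hasFDerivAt
          rw [ContinuousLinearMap.toSpanSingleton_zero] at h3
          exact h3
        rw [(h2.hasFDerivWithinAt).fderivWithin (isOpen_ball.uniqueDiffOn z hz)]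
      intro z hz
      exact Convex.is_const_of_fderivWithin_eq_zero (convex_ball _ _) hg this hz h0
    have := hginj h0 h2 (by rw [hconst _ h0, hconst _ h2])
    norm_num at this
  -- differentiability of h away from critical values
  have hdiff_at : ∀ w : ℂ, deriv g (h w) ≠ 0 → DifferentiableAt ℂ h w := by
    intro w hw
    have hd : HasDerivAt g (deriv g (h w)) (h w) :=
      ((hg _ (hball w)).differentiableAt (isOpen_ball.mem_nhds (hball w))).hasDerivAt
    exact (HasDerivAt.of_local_left_inverse (hcont.continuousAt) hd hw
      (Filter.Eventually.of_forall hgh)).differentiableAt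
  -- h is differentiable everywhere
  have hdiff : Differentiable ℂ h := by
    intro w
    rcases eq_or_ne (deriv g (h w)) 0 with hzero | hnz
    swap
    · exact hdiff_at w hnz
    -- isolated zero of deriv g
    have hiso : ∀ᶠ z in nhdsWithin (h w) {(h w)}ᶜ, deriv g z ≠ 0 := by
      rcases (hgderiv _ (hball w)).eventually_eq_zero_or_eventually_ne_zero with hz | hz
      · exfalso
        apply hdnz
        intro z hz'
        exact hgderiv.eqOn_zero_of_preconnected_of_eventuallyEq_zero
          (convex_ball _ _).isPreconnected (hball w) hz hz'
      · exact hz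
    -- punctured neighborhood differentiability
    have hpunct : ∀ᶠ y in nhdsWithin w {w}ᶜ, DifferentiableAt ℂ h y := by
      obtain ⟨U, hUsub, hUopen, hUmem⟩ := _root_.mem_nhds_iff.mp
        (eventually_nhdsWithin_iff.mp hiso)
      have hpre : h ⁻¹' U ∈ nhds w := hcont.continuousAt.preimage_mem_nhds
        (hUopen.mem_nhds hUmem)
      rw [eventually_nhdsWithin_iff]
      filter_upwards [hpre] with y hy hyne
      apply hdiff_at
      have hne : h y ≠ h w := by
        intro heq
        apply hyne
        have : g (h y) = g (h w) := by rw [heq]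
        rwa [hgh, hgh] at this
      exact hUsub hy hne
    exact (Complex.analyticAt_of_differentiable_on_punctured_nhds_of_continuousAt
      hpunct hcont.continuousAt).differentiableAt
  -- h is bounded
  have hbdd : Bornology.IsBounded (Set.range h) := by
    apply Bornology.IsBounded.subset (isBounded_ball (x := (0:ℂ)) (r := 1))
    rintro y ⟨w, rfl⟩
    exact hball w
  -- Liouville
  have := hdiff.apply_eq_apply_of_bounded hbdd (g 0) (g (1/2 : ℂ))
  rw [hleft _ h0, hleft _ h2] at this
  norm_num at this

lemma aux_coeff_bound
    (f g ω : ℂ → ℂ) (a : ℕ → ℂ)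
    (hg : DifferentiableOn ℂ g (ball (0 : ℂ) 1))
    (hginj : Set.InjOn g (ball (0 : ℂ) 1))
    (hconv : Convex ℝ (g '' ball (0 : ℂ) 1))
    (hf : ∀ z ∈ ball (0 : ℂ) 1, HasSum (fun n : ℕ => a n * z ^ n) (f z))
    (hω : DifferentiableOn ℂ ω (ball (0 : ℂ) 1))
    (hω0 : ω 0 = 0)
    (hωb : ∀ z ∈ ball (0 : ℂ) 1, ‖ω z‖ ≤ 1)
    (hsub : ∀ z ∈ ball (0 : ℂ) 1, f z = g (ω z))
    (lam : ℝ) (hlam : lam = infDist (g 0) (frontier (g '' ball (0 : ℂ) 1)))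
    (n : ℕ) (hn : 1 ≤ n) :
    ‖a n‖ ≤ 2 * lam := by
  have h0ball : (0:ℂ) ∈ ball (0:ℂ) 1 := by simp
  -- ω maps the ball into the open ball
  have hωmaps : ∀ z ∈ ball (0:ℂ) 1, ω z ∈ ball (0:ℂ) 1 := by
    intro z hz
    rw [mem_ball, dist_zero_right]
    rcases lt_or_eq_of_le (hωb z hz) with h | h
    · exact h
    · exfalso
      have hmax : IsMaxOn (norm ∘ ω) (ball (0:ℂ) 1) z := by
        apply isMaxOn_iff.mpr
        intro y hy
        simp only [Function.comp_apply]
        rw [h]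
        exact hωb y hy
      have heq := Complex.eqOn_of_isPreconnected_of_isMaxOn_norm
        (convex_ball _ _).isPreconnected isOpen_ball hω hz hmax
      have h00 := heq h0ball
      simp only [Function.const_apply, hω0] at h00
      rw [← h00] at h
      simp at h
  -- a 0 = g 0
  have ha0 : a 0 = g 0 := by
    have h1 := hf 0 h0ball
    have h2 : HasSum (fun k : ℕ => a k * (0:ℂ) ^ k) (a 0) := by
      have : (fun k : ℕ => a k * (0:ℂ) ^ k) = fun k => if k = 0 then a 0 else 0 := by
        funext k
        rcases Nat.eq_zero_or_pos k with rfl | hk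
        · simp
        · rw [if_neg (by omega), zero_pow (by omega), mul_zero]
      rw [this]
      exact hasSum_ite_eq 0 (a 0)
    have := h1.unique h2
    rw [← this, hsub 0 h0ball, hω0]
  set Ω : Set ℂ := g '' ball (0:ℂ) 1 with hΩ
  have hΩopen : IsOpen Ω := aux_isOpenMap g hg hginj _ le_rfl isOpen_ball
  have hg0Ω : g 0 ∈ Ω := ⟨0, h0ball, rfl⟩
  -- the frontier is nonempty
  have hfront : (frontier Ω).Nonempty := by
    rw [Set.nonempty_iff_ne_empty]
    intro hfe
    have hclopen : IsClopen Ω := isClopen_iff_frontier_eq_empty.mpr hfe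
    rcases isClopen_iff.mp hclopen with h | h
    · rw [h] at hg0Ω; exact hg0Ω
    · exact aux_not_surj g hg hginj h
  have hlam0 : 0 ≤ lam := hlam ▸ infDist_nonneg
  -- for every ε > 0 we get the bound with lam + ε
  have keyε : ∀ ε : ℝ, 0 < ε → ‖a n‖ ≤ 2 * (lam + ε) := by
    intro ε hε
    obtain ⟨p, hpfront, hpdist⟩ := (infDist_lt_iff hfront).mp
      (by rw [← hlam]; linarith : infDist (g 0) (frontier Ω) < lam + ε)
    have hpnot : p ∉ Ω := by
      intro hpΩ
      rw [hΩopen.frontier_eq] at hpfront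
      exact hpfront.2 hpΩ
    obtain ⟨φ, hφ⟩ := geometric_hahn_banach_open_point hconv hΩopen hpnot
    set u : ℂ := (φ 1 : ℝ) + (φ Complex.I : ℝ) * Complex.I with hu
    have hurep : ∀ w : ℂ, φ w = ((starRingEnd ℂ) u * w).re := by
      intro w
      have hw : w = w.re • (1:ℂ) + w.im • Complex.I := by
        simp [Complex.real_smul, Complex.re_add_im]
      calc φ w = φ (w.re • (1:ℂ) + w.im • Complex.I) := by rw [← hw]
        _ = w.re * φ 1 + w.im * φ Complex.I := by
            rw [map_add, map_smul, map_smul]; simp [smul_eq_mul]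
        _ = ((starRingEnd ℂ) u * w).re := by
            simp [hu, Complex.mul_re]
            ring
    have hune : u ≠ 0 := by
      intro h0
      have := hφ (g 0) hg0Ω
      rw [hurep (g 0), hurep p, h0] at this
      simp at this
    have huabs : 0 < ‖u‖ := by
      simpa [norm_pos_iff] using hune
    set v : ℂ := ((‖u‖ : ℝ) : ℂ)⁻¹ * u with hv
    have hvabs : ‖v‖ = 1 := by
      rw [hv, norm_mul, norm_inv, Complex.norm_real, Real.norm_eq_abs, _root_.abs_of_nonneg huabs.le]
      field_simp
    -- the halfplane bound
    have hhalf : ∀ w ∈ Ω, ((starRingEnd ℂ) v * (w - g 0)).re < lam + ε := by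
      intro w hw
      have hlin : ∀ x : ℂ, ((starRingEnd ℂ) v * x).re =
          (‖u‖)⁻¹ * ((starRingEnd ℂ) u * x).re := by
        intro x
        rw [hv, map_mul, mul_assoc]
        rw [map_inv₀, Complex.conj_ofReal]
        rw [← Complex.ofReal_inv, Complex.re_ofReal_mul]
      have h1 : ((starRingEnd ℂ) u * (w - g 0)).re = φ w - φ (g 0) := by
        rw [mul_sub, Complex.sub_re, ← hurep, ← hurep]
      have h2 : ((starRingEnd ℂ) u * (p - g 0)).re = φ p - φ (g 0) := by
        rw [mul_sub, Complex.sub_re, ← hurep, ← hurep]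
      have h3 : ((starRingEnd ℂ) v * (w - g 0)).re < ((starRingEnd ℂ) v * (p - g 0)).re := by
        rw [hlin, hlin, h1, h2]
        have := hφ w hw
        have hφw : φ w - φ (g 0) < φ p - φ (g 0) := by linarith
        exact mul_lt_mul_of_pos_left hφw (by positivity)
      refine lt_of_lt_of_le h3 ?_
      refine le_trans (Complex.re_le_norm _) ?_
      rw [norm_mul, Complex.norm_conj, hvabs, one_mul]
      rw [← Complex.dist_eq, dist_comm]
      exact hpdist.le
    -- build the series
    classical
    set c : ℕ → ℂ := Function.update (fun k => (starRingEnd ℂ) v * a k) 0 0 with hc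
    set F : ℂ → ℂ := fun z => (starRingEnd ℂ) v * (f z - a 0) with hF
    have hFs : ∀ z ∈ ball (0:ℂ) 1, HasSum (fun k => c k * z ^ k) (F z) := by
      intro z hz
      have base : HasSum (fun k => ((starRingEnd ℂ) v * a k) * z ^ k)
          ((starRingEnd ℂ) v * f z) := by
        have := (hf z hz).mul_left ((starRingEnd ℂ) v)
        refine this.congr_fun fun k => by ring
      have hupd := base.update 0 0
      have heq : (fun k => c k * z ^ k) =
          Function.update (fun k => ((starRingEnd ℂ) v * a k) * z ^ k) 0 0 := by
        funext k
        rcases Nat.eq_zero_or_pos k with rfl | hk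
        · simp [hc]
        · rw [Function.update_of_ne (by omega), hc, Function.update_of_ne (by omega)]
      rw [heq]
      convert hupd using 1
      · rfl
      simp [hF]
      ring
    have h0c : c 0 = 0 := by simp [hc]
    have hre : ∀ z ∈ ball (0:ℂ) 1, (F z).re ≤ lam + ε := by
      intro z hz
      have hfz : f z ∈ Ω := by
        rw [hsub z hz]
        exact ⟨ω z, hωmaps z hz, rfl⟩
      have := hhalf (f z) hfz
      rw [hF]
      simp only
      rw [ha0]
      exact this.le
    have := aux_carath c F (lam + ε) hFs h0c hre n hn
    have hcn : ‖c n‖ = ‖a n‖ := by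
      rw [hc, Function.update_of_ne (by omega)]
      rw [norm_mul, Complex.norm_conj, hvabs, one_mul]
    rwa [hcn] at this
  by_contra hlt
  push_neg at hlt
  have := keyε ((‖a n‖ - 2 * lam) / 4) (by linarith)
  linarith

set_option maxHeartbeats 1000000 in
/-- **Theorem 2.** Let `g` be analytic and univalent in the unit disk with convex image, let
`f(z) = Σ aₙ zⁿ` be subordinate to `g`, and let `λ = dist(g(0), ∂g(D)) ≤ 1`. Then
`Σ_{n≥1} |aₙ| rⁿ + (1/(2−λ) + r/(1−r)) Σ_{n≥1} |aₙ|² r^{2n}` ≤ λ for all `0 ≤ r ≤ r_*`. -/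
theorem subordination_convex_bohr
    (f g ω : ℂ → ℂ) (a : ℕ → ℂ)
    (hg : DifferentiableOn ℂ g (ball (0 : ℂ) 1))
    (hginj : Set.InjOn g (ball (0 : ℂ) 1))
    (hconv : Convex ℝ (g '' ball (0 : ℂ) 1))
    (hf : ∀ z ∈ ball (0 : ℂ) 1, HasSum (fun n : ℕ => a n * z ^ n) (f z))
    (hω : DifferentiableOn ℂ ω (ball (0 : ℂ) 1))
    (hω0 : ω 0 = 0)
    (hωb : ∀ z ∈ ball (0 : ℂ) 1, ‖ω z‖ ≤ 1)
    (hsub : ∀ z ∈ ball (0 : ℂ) 1, f z = g (ω z))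
    (lam : ℝ) (hlam : lam = infDist (g 0) (frontier (g '' ball (0 : ℂ) 1)))
    (hlam1 : lam ≤ 1)
    (rs : ℝ) (hrs : rs ∈ Set.Ioo (0 : ℝ) 1)
    (hroot : 3 * rs ^ 3 - 5 * rs ^ 2 - 3 * rs + 1 = 0)
    (r : ℝ) (hr0 : 0 ≤ r) (hr : r ≤ rs) :
    (∑' n : ℕ, ‖a (n + 1)‖ * r ^ (n + 1)) +
      (1 / (2 - lam) + r / (1 - r)) *
        (∑' n : ℕ, (‖a (n + 1)‖) ^ 2 * r ^ (2 * (n + 1))) ≤ lam := by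
  have hA : ∀ n : ℕ, ‖a (n + 1)‖ ≤ 2 * lam := fun n =>
    aux_coeff_bound f g ω a hg hginj hconv hf hω hω0 hωb hsub lam hlam (n+1) (by omega)
  have hlam0 : 0 ≤ lam := hlam ▸ infDist_nonneg
  have hr1 : r < 1 := lt_of_le_of_lt hr hrs.2
  have h1r : 0 < 1 - r := by linarith
  have hr2 : r ^ 2 < 1 := by nlinarith
  have hr20 : 0 ≤ r ^ 2 := by positivity
  have h1r2 : 0 < 1 - r ^ 2 := by linarith
  have h2lam : 0 < 2 - lam := by linarith
  -- summability facts
  have hgeo1 : Summable fun n : ℕ => 2 * lam * r ^ (n + 1) := by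
    apply Summable.mul_left
    have := (summable_geometric_of_lt_one hr0 hr1).mul_left r
    refine this.congr fun n => ?_
    rw [pow_succ]
    ring
  have hgeo2 : Summable fun n : ℕ => (2 * lam) ^ 2 * (r ^ 2) ^ (n + 1) := by
    apply Summable.mul_left
    have := (summable_geometric_of_lt_one hr20 hr2).mul_left (r ^ 2)
    refine this.congr fun n => ?_
    rw [pow_succ]
    ring
  have hS1 : Summable fun n : ℕ => ‖a (n + 1)‖ * r ^ (n + 1) :=
    Summable.of_nonneg_of_le (fun n => by positivity)
      (fun n => mul_le_mul_of_nonneg_right (hA n) (by positivity)) hgeo1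
  have hS2 : Summable fun n : ℕ => (‖a (n + 1)‖) ^ 2 * r ^ (2 * (n + 1)) := by
    refine Summable.of_nonneg_of_le (fun n => by positivity) (fun n => ?_) hgeo2
    rw [pow_mul]
    exact mul_le_mul_of_nonneg_right
      (pow_le_pow_left₀ (norm_nonneg _) (hA n) 2) (by positivity)
  -- tsum bounds
  have hT1 : (∑' n : ℕ, ‖a (n + 1)‖ * r ^ (n + 1)) ≤ 2 * lam * (r / (1 - r)) := by
    calc (∑' n : ℕ, ‖a (n + 1)‖ * r ^ (n + 1))
        ≤ ∑' n : ℕ, 2 * lam * r ^ (n + 1) := by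
          apply Summable.tsum_le_tsum _ hS1 hgeo1
          exact fun n => mul_le_mul_of_nonneg_right (hA n) (by positivity)
      _ = 2 * lam * (r / (1 - r)) := by
          rw [tsum_mul_left]
          congr 1
          have h1 : (fun n : ℕ => r ^ (n + 1)) = fun n : ℕ => r * r ^ n := by
            funext n; rw [pow_succ]; ring
          rw [h1, tsum_mul_left, tsum_geometric_of_lt_one hr0 hr1]
          rw [div_eq_mul_inv]
      _ = 2 * lam * (r / (1 - r)) := rfl
  have hT2 : (∑' n : ℕ, (‖a (n + 1)‖) ^ 2 * r ^ (2 * (n + 1))) ≤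
      (2 * lam) ^ 2 * (r ^ 2 / (1 - r ^ 2)) := by
    calc (∑' n : ℕ, (‖a (n + 1)‖) ^ 2 * r ^ (2 * (n + 1)))
        ≤ ∑' n : ℕ, (2 * lam) ^ 2 * (r ^ 2) ^ (n + 1) := by
          apply Summable.tsum_le_tsum _ hS2 hgeo2
          intro n
          rw [pow_mul]
          exact mul_le_mul_of_nonneg_right
            (pow_le_pow_left₀ (norm_nonneg _) (hA n) 2) (by positivity)
      _ = (2 * lam) ^ 2 * (r ^ 2 / (1 - r ^ 2)) := by
          rw [tsum_mul_left]
          congr 1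
          have h1 : (fun n : ℕ => (r ^ 2) ^ (n + 1)) = fun n : ℕ => r ^ 2 * (r ^ 2) ^ n := by
            funext n; rw [pow_succ]; ring
          rw [h1, tsum_mul_left, tsum_geometric_of_lt_one hr20 hr2]
          rw [div_eq_mul_inv]
  have hC0 : 0 ≤ 1 / (2 - lam) + r / (1 - r) := by positivity
  -- polynomial facts
  have hrs13 : rs < 1 / 3 := by nlinarith [hrs.1, hrs.2, sq_nonneg rs, hrs.1.le]
  have hp : 0 ≤ 3 * r ^ 3 - 5 * r ^ 2 - 3 * r + 1 := by
    nlinarith [mul_nonneg (sub_nonneg.2 hr) hr0, mul_nonneg (sub_nonneg.2 hr) hrs.1.le,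
      mul_nonneg (mul_nonneg (sub_nonneg.2 hr) hr0) hr0,
      mul_nonneg (mul_nonneg (sub_nonneg.2 hr) hrs.1.le) hrs.1.le,
      mul_nonneg (mul_nonneg (sub_nonneg.2 hr) hr0) hrs.1.le, hrs.2, hrs.1]
  have hlr : lam * r ≤ 1 := by nlinarith
  have hB : 0 ≤ (1 - r ^ 2) * (1 - 3 * r) := by nlinarith [hp]
  have haux : 0 ≤ (1 - r ^ 2) * (1 - 3 * r) + 4 * r ^ 2 * (1 - lam * r) := by nlinarith
  have hQ : 0 ≤ (2 - lam) * ((1 - r ^ 2) * (1 - 3 * r)) - 4 * lam * r ^ 2 * (1 + r - lam * r) := by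
    nlinarith [hp, mul_nonneg (by linarith : (0:ℝ) ≤ 1 - lam) haux]
  -- the final polynomial inequality
  have hpoly : 2 * lam * r * (2 - lam) * (1 - r ^ 2) + ((1 - r) + r * (2 - lam)) * (4 * lam ^ 2 * r ^ 2)
      ≤ lam * ((2 - lam) * (1 - r) * (1 - r ^ 2)) := by
    nlinarith [mul_nonneg hlam0 hQ]
  have hfinal : 2 * lam * (r / (1 - r)) + (1 / (2 - lam) + r / (1 - r)) *
      ((2 * lam) ^ 2 * (r ^ 2 / (1 - r ^ 2))) ≤ lam := by
    rw [show 2 * lam * (r / (1 - r)) + (1 / (2 - lam) + r / (1 - r)) *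
        ((2 * lam) ^ 2 * (r ^ 2 / (1 - r ^ 2))) =
        (2 * lam * r * (2 - lam) * (1 - r ^ 2) + ((1 - r) + r * (2 - lam)) * (4 * lam ^ 2 * r ^ 2)) /
          ((2 - lam) * (1 - r) * (1 - r ^ 2)) by
      field_simp
      ring]
    rw [div_le_iff₀ (by positivity)]
    linarith [hpoly]
  calc (∑' n : ℕ, ‖a (n + 1)‖ * r ^ (n + 1)) +
      (1 / (2 - lam) + r / (1 - r)) *
        (∑' n : ℕ, (‖a (n + 1)‖) ^ 2 * r ^ (2 * (n + 1)))
      ≤ 2 * lam * (r / (1 - r)) + (1 / (2 - lam) + r / (1 - r)) *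
        ((2 * lam) ^ 2 * (r ^ 2 / (1 - r ^ 2))) :=
        add_le_add hT1 (mul_le_mul_of_nonneg_left hT2 hC0)
    _ ≤ lam := hfinal
end

section
/- Define Φ(λ,r) = 4r³λ² − (7r³ + 3r² − 3r + 1)λ + 6r³ − 2r² − 6r + 2 and let r_* be the unique root in (0,1) of 3r³ − 5r² − 3r + 1 = 0. Then Φ(λ,r) ≥ 0 for every λ ∈ (0,1] and every r ∈ [0, r_*]. -/
/-- With `Φ(λ,r) = 4r³λ² − (7r³ + 3r² − 3r + 1)λ + 6r³ − 2r² − 6r + 2` and `r_*` the unique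
root of `3r³ − 5r² − 3r + 1 = 0` in `(0,1)`, one has `Φ(λ,r) ≥ 0` for every `λ ∈ (0,1]` and
`r ∈ [0, r_*]`. -/
theorem Phi_nonneg
    (rs : ℝ) (hrs : rs ∈ Set.Ioo (0 : ℝ) 1)
    (hroot : 3 * rs ^ 3 - 5 * rs ^ 2 - 3 * rs + 1 = 0)
    (lam : ℝ) (hlam : lam ∈ Set.Ioc (0 : ℝ) 1)
    (r : ℝ) (hr : r ∈ Set.Icc (0 : ℝ) rs) :
    0 ≤ 4 * r ^ 3 * lam ^ 2 - (7 * r ^ 3 + 3 * r ^ 2 - 3 * r + 1) * lam +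
      6 * r ^ 3 - 2 * r ^ 2 - 6 * r + 2 := by
  obtain ⟨hrs0, hrs1⟩ := hrs
  obtain ⟨hr0, hrrs⟩ := hr
  obtain ⟨hl0, hl1⟩ := hlam
  have hr1 : r ≤ 1 := le_trans hrrs hrs1.le
  -- f(r) ≥ 0 on [0, rs]
  have h1 : 0 ≤ 3 * r ^ 3 - 5 * r ^ 2 - 3 * r + 1 := by
    nlinarith [mul_nonneg (sub_nonneg.2 hrrs) hr0, mul_nonneg (sub_nonneg.2 hrrs) hrs0.le,
      mul_nonneg (mul_nonneg (sub_nonneg.2 hrrs) hr0) hr0,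
      mul_nonneg (mul_nonneg (sub_nonneg.2 hrrs) hrs0.le) hrs0.le,
      mul_nonneg (mul_nonneg (sub_nonneg.2 hrrs) hr0) hrs0.le,
      mul_nonneg (sub_nonneg.2 hrs1.le) hrs0.le, sq_nonneg (r - rs), sq_nonneg (r + rs)]
  -- (1-λ) factor times (b - 4r³(1+λ)) is nonneg
  have hcube : 0 ≤ (1 - r) ^ 3 := pow_nonneg (by linarith) 3
  have h2 : 0 ≤ (1 - lam) * ((7 * r ^ 3 + 3 * r ^ 2 - 3 * r + 1) - 4 * r ^ 3 * (1 + lam)) := by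
    apply mul_nonneg (by linarith)
    nlinarith [mul_nonneg (mul_nonneg (mul_nonneg hr0 hr0) hr0) (sub_nonneg.2 hl1)]
  nlinarith [h1, h2]
end

section
/- Define Φ(λ,r) = 4r³λ² − (7r³ + 3r² − 3r + 1)λ + 6r³ − 2r² − 6r + 2, whose partial derivative with respect to r is ∂Φ/∂r = 12r²λ² − (21r² + 6r − 3)λ + 18r² − 4r − 6. Then ∂Φ/∂r(λ,r) < 0 for every λ ∈ (0,1) and every r ∈ [r_*, 1/3], where r_* is the unique root in (0,1) of 3r³ − 5r² − 3r + 1 = 0. -/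
/-- With `Φ(λ,r) = 4r³λ² − (7r³ + 3r² − 3r + 1)λ + 6r³ − 2r² − 6r + 2`, the partial derivative
of `Φ` with respect to `r` equals `12r²λ² − (21r² + 6r − 3)λ + 18r² − 4r − 6`, and this is
negative for every `λ ∈ (0,1)` and `r ∈ [r_*, 1/3]`, where `r_*` is the unique root of
`3r³ − 5r² − 3r + 1 = 0` in `(0,1)`. -/
theorem Phi_partial_r_neg
    (rs : ℝ) (hrs : rs ∈ Set.Ioo (0 : ℝ) 1)
    (hroot : 3 * rs ^ 3 - 5 * rs ^ 2 - 3 * rs + 1 = 0)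
    (lam : ℝ) (hlam : lam ∈ Set.Ioo (0 : ℝ) 1)
    (r : ℝ) (hr : r ∈ Set.Icc rs (1 / 3 : ℝ)) :
    HasDerivAt
      (fun t : ℝ => 4 * t ^ 3 * lam ^ 2 - (7 * t ^ 3 + 3 * t ^ 2 - 3 * t + 1) * lam +
        6 * t ^ 3 - 2 * t ^ 2 - 6 * t + 2)
      (12 * r ^ 2 * lam ^ 2 - (21 * r ^ 2 + 6 * r - 3) * lam + 18 * r ^ 2 - 4 * r - 6) r ∧
    12 * r ^ 2 * lam ^ 2 - (21 * r ^ 2 + 6 * r - 3) * lam + 18 * r ^ 2 - 4 * r - 6 < 0 := by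
  obtain ⟨hrs0, hrs1⟩ := hrs
  obtain ⟨hl0, hl1⟩ := hlam
  obtain ⟨hr1, hr2⟩ := hr
  have hrpos : 0 < r := lt_of_lt_of_le hrs0 hr1
  constructor
  · have h3 : HasDerivAt (fun t : ℝ => t ^ 3) (3 * r ^ 2) r := by
      simpa using hasDerivAt_pow 3 r
    have h2 : HasDerivAt (fun t : ℝ => t ^ 2) (2 * r) r := by
      simpa using hasDerivAt_pow 2 r
    have hid : HasDerivAt (fun t : ℝ => t) 1 r := hasDerivAt_id r
    have hA := ((((((h3.const_mul (4:ℝ)).mul_const (lam ^ 2)).sub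
        (((((h3.const_mul (7:ℝ)).add (h2.const_mul (3:ℝ))).sub
          (hid.const_mul (3:ℝ))).add_const (1:ℝ)).mul_const lam)).add
        (h3.const_mul (6:ℝ))).sub (h2.const_mul (2:ℝ))).sub
        (hid.const_mul (6:ℝ))).add_const (2:ℝ)
    exact hA.congr_deriv (by ring)
  · nlinarith [mul_pos hl0 (sub_pos.mpr hl1), sq_nonneg r, mul_pos hrpos hrpos,
      mul_nonneg (mul_nonneg (sq_nonneg r) hl0.le) (sub_pos.mpr hl1).le,
      mul_nonneg hrpos.le hl0.le, mul_nonneg hrpos.le (sub_pos.mpr hl1).le]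
end

section
/- Define Ψ(λ,r) = 16λ²r³(1 + r²) − λ[(1 − 6r + r²)(1 − r)²(1 + r)³ + 16r²(1 + r)(1 + r²)] + 2(1 − 6r + r²)(1 − r)²(1 + r)³, and let r_g be the unique root in (0,1) of (1 − 6r + r²)(1 − r)²(1 + r)³ − 16r²(1 + r²) = 0. Then Ψ(λ,r) ≥ 0 for every λ ∈ (0,1] and every r ∈ [0, r_g]. -/
/-- The divided difference `-(f(r)-f(g))/(r-g)` of
`f(r) = (1-6r+r²)(1-r)²(1+r)³ - 16r²(1+r²)` is nonnegative for `0 ≤ r ≤ g ≤ 1`. -/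
lemma Psi_aux_H_nonneg (r g : ℝ) (h0 : 0 ≤ r) (hrg : r ≤ g) (hg1 : g ≤ 1) :
    0 ≤ 5 + 23 * (r + g) - 11 * (r^2 + r*g + g^2)
      + 5 * (r^3 + r^2*g + r*g^2 + g^3)
      + 7 * (r^4 + r^3*g + r^2*g^2 + r*g^3 + g^4)
      + 5 * (r^5 + r^4*g + r^3*g^2 + r^2*g^3 + r*g^4 + g^5)
      - (r^6 + r^5*g + r^4*g^2 + r^3*g^3 + r^2*g^4 + r*g^5 + g^6) := by
  have hg0 : 0 ≤ g := le_trans h0 hrg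
  have hr1 : r ≤ 1 := le_trans hrg hg1
  -- each degree-6 monomial is ≤ g^4
  have hkey : ∀ i j : ℕ, i + j = 6 → r ^ i * g ^ j ≤ g ^ 4 := by
    intro i j hij
    have h1 : r ^ i ≤ g ^ i := pow_le_pow_left₀ h0 hrg i
    have h2 : r ^ i * g ^ j ≤ g ^ i * g ^ j :=
      mul_le_mul_of_nonneg_right h1 (pow_nonneg hg0 j)
    have h3 : g ^ i * g ^ j = g ^ 6 := by rw [← pow_add, hij]
    have h4 : g ^ 6 ≤ g ^ 4 := pow_le_pow_of_le_one hg0 hg1 (by norm_num)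
    linarith
  have e0 := hkey 6 0 (by norm_num)
  have e1 := hkey 5 1 (by norm_num)
  have e2 := hkey 4 2 (by norm_num)
  have e3 := hkey 3 3 (by norm_num)
  have e4 := hkey 2 4 (by norm_num)
  have e5 := hkey 1 5 (by norm_num)
  have e6 := hkey 0 6 (by norm_num)
  simp only [pow_zero, one_mul, mul_one] at e0 e1 e2 e3 e4 e5 e6
  -- the degree-2 sum is ≤ 3 g²
  have hS2 : r^2 + r*g + g^2 ≤ 3 * g^2 := by nlinarith [mul_le_mul_of_nonneg_right hrg hg0, mul_le_mul_of_nonneg_right hrg h0]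
  -- leftover monomials are nonnegative
  have p1 : 0 ≤ r^4 + r^3*g + r^2*g^2 + r*g^3 := by positivity
  have p2 : 0 ≤ r^3 + r^2*g + r*g^2 := by positivity
  have p3 : 0 ≤ r^5 + r^4*g + r^3*g^2 + r^2*g^3 + r*g^4 := by positivity
  -- it remains: 5 + 23 g - 33 g² + 5 g³ + 5 g⁵ ≥ 0, since
  -- 5 g³ - 33 g² + 23 g + 5 = (1-g)(28 g + 5 - 5 g²) ≥ 0.
  have hfac : 0 ≤ (1 - g) * (28 * g + 5 - 5 * g^2) := by
    have : 0 ≤ 28 * g + 5 - 5 * g^2 := by nlinarith [pow_le_pow_of_le_one hg0 hg1 (show (0:ℕ) ≤ 2 by norm_num)]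
    exact mul_nonneg (by linarith) this
  nlinarith [pow_nonneg hg0 5, pow_nonneg hg0 3]

/-- With `Ψ(λ,r) = 16λ²r³(1+r²) − λ[(1−6r+r²)(1−r)²(1+r)³ + 16r²(1+r)(1+r²)]
+ 2(1−6r+r²)(1−r)²(1+r)³` and `r_g` the unique root of
`(1−6r+r²)(1−r)²(1+r)³ − 16r²(1+r²) = 0` in `(0,1)`, one has `Ψ(λ,r) ≥ 0` for every
`λ ∈ (0,1]` and `r ∈ [0, r_g]`. -/
theorem Psi_nonneg
    (rg : ℝ) (hrg : rg ∈ Set.Ioo (0 : ℝ) 1)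
    (hroot : (1 - 6 * rg + rg ^ 2) * (1 - rg) ^ 2 * (1 + rg) ^ 3 -
      16 * rg ^ 2 * (1 + rg ^ 2) = 0)
    (lam : ℝ) (hlam : lam ∈ Set.Ioc (0 : ℝ) 1)
    (r : ℝ) (hr : r ∈ Set.Icc (0 : ℝ) rg) :
    0 ≤ 16 * lam ^ 2 * r ^ 3 * (1 + r ^ 2) -
      lam * ((1 - 6 * r + r ^ 2) * (1 - r) ^ 2 * (1 + r) ^ 3 +
        16 * r ^ 2 * (1 + r) * (1 + r ^ 2)) +
      2 * (1 - 6 * r + r ^ 2) * (1 - r) ^ 2 * (1 + r) ^ 3 := by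
  obtain ⟨hrg0, hrg1⟩ := hrg
  obtain ⟨hlam0, hlam1⟩ := hlam
  obtain ⟨hr0, hrr⟩ := hr
  set g := rg with hg
  have hH := Psi_aux_H_nonneg r g hr0 hrr (le_of_lt hrg1)
  -- f(r) - f(g) = (g - r) * H(r,g)
  have hident : (1 - 6 * r + r ^ 2) * (1 - r) ^ 2 * (1 + r) ^ 3 -
      16 * r ^ 2 * (1 + r ^ 2) =
      ((1 - 6 * g + g ^ 2) * (1 - g) ^ 2 * (1 + g) ^ 3 -
        16 * g ^ 2 * (1 + g ^ 2)) +
      (g - r) * (5 + 23 * (r + g) - 11 * (r^2 + r*g + g^2)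
        + 5 * (r^3 + r^2*g + r*g^2 + g^3)
        + 7 * (r^4 + r^3*g + r^2*g^2 + r*g^3 + g^4)
        + 5 * (r^5 + r^4*g + r^3*g^2 + r^2*g^3 + r*g^4 + g^5)
        - (r^6 + r^5*g + r^4*g^2 + r^3*g^3 + r^2*g^4 + r*g^5 + g^6)) := by
    ring
  have hprod : 0 ≤ (g - r) * (5 + 23 * (r + g) - 11 * (r^2 + r*g + g^2)
        + 5 * (r^3 + r^2*g + r*g^2 + g^3)
        + 7 * (r^4 + r^3*g + r^2*g^2 + r*g^3 + g^4)
        + 5 * (r^5 + r^4*g + r^3*g^2 + r^2*g^3 + r*g^4 + g^5)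
        - (r^6 + r^5*g + r^4*g^2 + r^3*g^3 + r^2*g^4 + r*g^5 + g^6)) :=
    mul_nonneg (by linarith) hH
  -- hence f(r) ≥ 0 on [0, rg]
  have hAB : 0 ≤ (1 - 6 * r + r ^ 2) * (1 - r) ^ 2 * (1 + r) ^ 3 -
      16 * r ^ 2 * (1 + r ^ 2) := by
    rw [hident, hroot]; linarith
  -- Ψ = (2-λ)(A-B) + (1-λ)(2-λr)·16r²(1+r²)
  have hB : (0:ℝ) ≤ 16 * r ^ 2 * (1 + r ^ 2) := by positivity
  have hr1 : r ≤ 1 := le_trans hrr (le_of_lt hrg1)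
  have h1 : (0:ℝ) ≤ (2 - lam) *
      ((1 - 6 * r + r ^ 2) * (1 - r) ^ 2 * (1 + r) ^ 3 -
        16 * r ^ 2 * (1 + r ^ 2)) :=
    mul_nonneg (by linarith) hAB
  have h2 : (0:ℝ) ≤ (1 - lam) * (2 - lam * r) * (16 * r ^ 2 * (1 + r ^ 2)) := by
    have : lam * r ≤ 1 := by nlinarith
    exact mul_nonneg (mul_nonneg (by linarith) (by linarith)) hB
  nlinarith [h1, h2]
end

section
/- Let 0 < p ≤ 2, let a ∈ (0,1), and let φ_a(z) = (a − z)/(1 − a z) = a − (1 − a²) Σ_{k=1}^∞ a^{k−1} z^k for z in the unit disk D. Then for r ∈ (0,1) the quantity a^p + Σ_{k=1}^∞ (1 − a²) a^{k−1} r^k + (1/(1+a) + r/(1−r)) · Σ_{k=1}^∞ (1 − a²)² a^{2(k−1)} r^{2k} equals 1 − a + a^p + (1 − a)[(2 + a)r − 1]/(1 − r), and this is strictly greater than 1 if and only if r > (1 − a^p)/(2 − a² − a^p). -/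
open Metric

/-- **Sharpness example.** For `0 < p ≤ 2`, `a ∈ (0,1)` and the disk automorphism
`φ_a(z) = (a − z)/(1 − a z) = a − (1 − a²) Σ_{k≥1} a^{k−1} z^k`, for every `r ∈ (0,1)`
the quantity `a^p + Σ_{k≥1} (1−a²) a^{k−1} r^k + (1/(1+a) + r/(1−r)) Σ_{k≥1} (1−a²)² a^{2(k−1)} r^{2k}`
equals `1 − a + a^p + (1−a)[(2+a)r − 1]/(1−r)`, and this is `> 1` iff
`r > (1 − a^p)/(2 − a² − a^p)`. -/
theorem sharpness_example
    (p a : ℝ) (hp0 : 0 < p) (hp2 : p ≤ 2) (ha : a ∈ Set.Ioo (0 : ℝ) 1)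
    (r : ℝ) (hr : r ∈ Set.Ioo (0 : ℝ) 1) :
    (∀ z ∈ ball (0 : ℂ) 1,
      HasSum (fun k : ℕ => -((1 - (a : ℂ) ^ 2) * (a : ℂ) ^ k * z ^ (k + 1)))
        (((a : ℂ) - z) / (1 - (a : ℂ) * z) - (a : ℂ))) ∧
    a ^ p + (∑' k : ℕ, (1 - a ^ 2) * a ^ k * r ^ (k + 1)) +
        (1 / (1 + a) + r / (1 - r)) *
          (∑' k : ℕ, (1 - a ^ 2) ^ 2 * a ^ (2 * k) * r ^ (2 * (k + 1)))
      = 1 - a + a ^ p + (1 - a) * ((2 + a) * r - 1) / (1 - r) ∧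
    (1 < 1 - a + a ^ p + (1 - a) * ((2 + a) * r - 1) / (1 - r) ↔
      (1 - a ^ p) / (2 - a ^ 2 - a ^ p) < r) := by
  obtain ⟨ha0, ha1⟩ := ha
  obtain ⟨hr0, hr1⟩ := hr
  have hap : a ^ p < 1 := Real.rpow_lt_one ha0.le ha1 hp0
  have hap0 : 0 < a ^ p := Real.rpow_pos_of_pos ha0 p
  have har : a * r < 1 := by nlinarith
  have har0 : 0 < a * r := mul_pos ha0 hr0
  refine ⟨?_, ?_, ?_⟩
  · intro z hz
    have hz1 : ‖z‖ < 1 := by simpa using hz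
    have hnorm : ‖(a : ℂ) * z‖ < 1 := by
      rw [norm_mul, Complex.norm_real, Real.norm_eq_abs, abs_of_pos ha0]
      nlinarith [norm_nonneg z]
    have hne : (1 : ℂ) - (a : ℂ) * z ≠ 0 := by
      intro h
      have : (1 : ℂ) = (a : ℂ) * z := by linear_combination h
      have := congrArg norm this
      rw [← this, norm_one] at hnorm
      exact lt_irrefl _ hnorm
    have hgeo := (hasSum_geometric_of_norm_lt_one hnorm).mul_left
      (-(1 - (a : ℂ) ^ 2) * z)
    have heq : ((a : ℂ) - z) / (1 - (a : ℂ) * z) - (a : ℂ)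
        = -(1 - (a : ℂ) ^ 2) * z * (1 - (a : ℂ) * z)⁻¹ := by
      field_simp
      ring
    rw [heq]
    have hf : (fun k : ℕ => -((1 - (a : ℂ) ^ 2) * (a : ℂ) ^ k * z ^ (k + 1)))
        = fun k : ℕ => -(1 - (a : ℂ) ^ 2) * z * ((a : ℂ) * z) ^ k := by
      funext k
      rw [mul_pow, pow_succ]
      ring
    rw [hf]
    exact hgeo
  · have hg1 : HasSum (fun k : ℕ => (1 - a ^ 2) * a ^ k * r ^ (k + 1))
        ((1 - a ^ 2) * r / (1 - a * r)) := by
      have h := (hasSum_geometric_of_lt_one har0.le har).mul_left ((1 - a ^ 2) * r)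
      have hf : (fun k : ℕ => (1 - a ^ 2) * a ^ k * r ^ (k + 1))
          = fun k : ℕ => (1 - a ^ 2) * r * (a * r) ^ k := by
        funext k
        rw [mul_pow, pow_succ]
        ring
      rw [hf, div_eq_mul_inv]
      exact h
    have hs2 : a ^ 2 * r ^ 2 < 1 := by nlinarith
    have hs20 : 0 ≤ a ^ 2 * r ^ 2 := by positivity
    have hg2 : HasSum (fun k : ℕ => (1 - a ^ 2) ^ 2 * a ^ (2 * k) * r ^ (2 * (k + 1)))
        ((1 - a ^ 2) ^ 2 * r ^ 2 / (1 - a ^ 2 * r ^ 2)) := by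
      have h := (hasSum_geometric_of_lt_one hs20 hs2).mul_left ((1 - a ^ 2) ^ 2 * r ^ 2)
      have hf : (fun k : ℕ => (1 - a ^ 2) ^ 2 * a ^ (2 * k) * r ^ (2 * (k + 1)))
          = fun k : ℕ => (1 - a ^ 2) ^ 2 * r ^ 2 * (a ^ 2 * r ^ 2) ^ k := by
        funext k
        rw [mul_pow, pow_mul, pow_mul, pow_succ]
        ring
      rw [hf, div_eq_mul_inv]
      exact h
    rw [hg1.tsum_eq, hg2.tsum_eq]
    have h1 : (1 : ℝ) + a ≠ 0 := by positivity
    have h2 : (1 : ℝ) - r ≠ 0 := by nlinarith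
    have h3 : (1 : ℝ) - a * r ≠ 0 := by nlinarith
    have h4 : (1 : ℝ) - a ^ 2 * r ^ 2 ≠ 0 := by nlinarith
    field_simp
    ring
  · have h2 : (0 : ℝ) < 1 - r := by linarith
    have hden : (0 : ℝ) < 2 - a ^ 2 - a ^ p := by nlinarith
    rw [div_lt_iff₀ hden]
    rw [show (1 : ℝ) - a + a ^ p + (1 - a) * ((2 + a) * r - 1) / (1 - r)
        = 1 + ((1 - a ^ p) * (r - 1) + r * (1 - a ^ 2)) / (1 - r) by
      field_simp; ring]
    rw [lt_add_iff_pos_right, div_pos_iff]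
    constructor
    · rintro (⟨h, -⟩ | ⟨-, h⟩)
      · nlinarith
      · nlinarith
    · intro h
      left
      constructor
      · nlinarith
      · exact h2
end
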